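/- arXiv:2105.05223 — 4 statements merged into one kernel-verified Lean document; each statement's English description precedes it below -/
import Mathlib

section
/- Let G be a group and F ⊆ G' two families of subgroups of G. Let Q = ℓ∞(G/F)/ℝ·1 be the quotient normed space of bounded real-valued functions on G/F by the constants, a normed ℝG-module via (g·f)(x) = f(g⁻¹·x), and let Q^# be its dual. Define the relative Johnson cocycle J_F : (G/F)² → Q^# by J_F(x,y)([f]) = f(y) − f(x). Suppose there exist a bounded G-equivariant function c : (G/G')² → Q^# with δ¹c = 0 and a bounded G-equivariant function b : G/F → Q^# such that the restriction of c to (G/F)² equals J_F + δ⁰b. Then every subgroup H ∈ G' is amenable relative to the family F|_H = {L ∩ H : L ∈ F}, i.e. the H-set ⨿_{L∈F|_H} H/L admits an H-invariant mean. -/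
open scoped BigOperators

universe u v w

namespace RelBdd

variable {G : Type u} [Group G]

/-- `F` is a family of subgroups of `G`: nonempty, closed under conjugation and
closed under taking subgroups. -/
def IsFamily (F : Set (Subgroup G)) : Prop :=
  F.Nonempty ∧
    (∀ H ∈ F, ∀ g : G, Subgroup.map ((MulAut.conj g).toMonoidHom) H ∈ F) ∧
    ∀ H ∈ F, ∀ K : Subgroup G, K ≤ H → K ∈ F

/-- The `G`-set `G/F = ⨿_{H ∈ F} G/H`. -/
abbrev Cos (G : Type u) [Group G] (F : Set (Subgroup G)) : Type u :=
  Σ H : F, G ⧸ (H : Subgroup G)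

instance (F : Set (Subgroup G)) : SMul G (Cos G F) :=
  ⟨fun g x => ⟨x.1, g • x.2⟩⟩

instance (F : Set (Subgroup G)) : MulAction G (Cos G F) where
  one_smul := by
    rintro ⟨H, q⟩
    show (⟨H, (1 : G) • q⟩ : Cos G F) = ⟨H, q⟩
    rw [one_smul]
  mul_smul g h := by
    rintro ⟨H, q⟩
    show (⟨H, (g * h) • q⟩ : Cos G F) = ⟨H, g • h • q⟩
    rw [mul_smul]

/-- A function into a normed space is bounded. -/
def Bdd {α : Type*} {V : Type*} [Norm V] (f : α → V) : Prop :=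
  ∃ C : ℝ, ∀ x, ‖f x‖ ≤ C

/-- The simplicial coboundary operator on `V`-valued cochains on a set `S`. -/
def delta {S : Type*} {V : Type*} [AddCommGroup V] [Module ℝ V] (n : ℕ)
    (f : (Fin (n + 1) → S) → V) : (Fin (n + 2) → S) → V :=
  fun x => ∑ i : Fin (n + 2), ((-1 : ℝ) ^ (i : ℕ)) • f (fun j => x (i.succAbove j))

/-- `ℓ∞(S)`: the space of bounded real valued functions on `S`. -/
def Linf (S : Type v) : Submodule ℝ (S → ℝ) where
  carrier := {f | ∃ C : ℝ, ∀ s, |f s| ≤ C}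
  add_mem' := by
    rintro f g ⟨C, hC⟩ ⟨D, hD⟩
    exact ⟨C + D, fun s => (abs_add_le _ _).trans (add_le_add (hC s) (hD s))⟩
  zero_mem' := ⟨0, fun s => by simp⟩
  smul_mem' := by
    rintro r f ⟨C, hC⟩
    refine ⟨|r| * C, fun s => ?_⟩
    show |r * f s| ≤ |r| * C
    rw [abs_mul]
    exact mul_le_mul_of_nonneg_left (hC s) (abs_nonneg r)

/-- The constant function `r` as an element of `ℓ∞(S)`. -/
def constLinf (S : Type v) (r : ℝ) : Linf S :=
  ⟨fun _ => r, ⟨|r|, fun _ => le_rfl⟩⟩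

/-- Precomposition with a map `φ : S → S` as a linear endomorphism of `ℓ∞(S)`. -/
def compL {S : Type v} (φ : S → S) : Linf S →ₗ[ℝ] Linf S where
  toFun f := ⟨fun s => (f : S → ℝ) (φ s), by
    obtain ⟨C, hC⟩ := f.2
    exact ⟨C, fun s => hC (φ s)⟩⟩
  map_add' f g := by ext s; rfl
  map_smul' r f := by ext s; rfl

/-- There exists a `K`-invariant mean on the `K`-set `S`. -/
def InvariantMean (K : Type u) (S : Type v) [Group K] [MulAction K S] : Prop :=
  ∃ m : Linf S →ₗ[ℝ] ℝ,
    m (constLinf S 1) = 1 ∧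
    (∀ f : Linf S, (∀ s, 0 ≤ (f : S → ℝ) s) → 0 ≤ m f) ∧
    ∀ (g : K) (f : Linf S), m (compL (fun s => g⁻¹ • s) f) = m f

/-- The restriction `F|_H = {L ∩ H : L ∈ F}` of a collection of subgroups of `G` to
a collection of subgroups of `H`. -/
def restrictedFamily (F : Set (Subgroup G)) (H : Subgroup G) : Set (Subgroup H) :=
  {K | ∃ L ∈ F, K = L.subgroupOf H}

/-- `K` is amenable relative to the collection `𝒦` of its subgroups: the `K`-set
`⨿_{L ∈ 𝒦} K/L` admits a `K`-invariant mean. -/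
def RelativelyAmenable (K : Type u) [Group K] (𝒦 : Set (Subgroup K)) : Prop :=
  InvariantMean K (Cos K 𝒦)

/-- The family generated by a set `ℋ` of subgroups: all subgroups of conjugates of
members of `ℋ`, together with the trivial subgroup. -/
def famGen (ℋ : Set (Subgroup G)) : Set (Subgroup G) :=
  {K | K = ⊥ ∨ ∃ H ∈ ℋ, ∃ g : G, ∀ x ∈ K, g⁻¹ * x * g ∈ H}

/-- The left multiplication action of `g ∈ G` on a normed `ℝG`-module `W`, as a
continuous linear map. -/
def smulCLM {W : Type w} [NormedAddCommGroup W] [NormedSpace ℝ W] [DistribMulAction G W]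
    [SMulCommClass G ℝ W] (hW : ∀ (g : G) (w : W), ‖g • w‖ = ‖w‖) (g : G) : W →L[ℝ] W :=
  LinearMap.mkContinuous
    { toFun := fun w => g • w
      map_add' := fun a b => smul_add g a b
      map_smul' := fun r w => smul_comm g r w }
    1 (fun w => by simp [hW])

/-- Evaluation at a point `s ∈ S`, as a linear functional on `ℓ∞(S)`. -/
noncomputable def evalLinf {S : Type v} (s : S) : Linf S →ₗ[ℝ] ℝ :=
  (LinearMap.proj s).comp (Linf S).subtype

/-- The inclusion of `G`-sets `G/F ⊆ G/G'` for families `F ⊆ G'`. -/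
def inclCos {G : Type u} [Group G] {F F' : Set (Subgroup G)} (h : F ⊆ F') :
    Cos G F → Cos G F' :=
  fun x => ⟨⟨(x.1 : Subgroup G), h x.1.2⟩, x.2⟩

/-- The relative Johnson cocycle `J_F (x₀, x₁) = ε_{x₁} - ε_{x₀}`, with values in
the dual of `Q = ℓ∞(G/F)/ℝ·1`, realized as the space of bounded linear functionals
on `ℓ∞(G/F)` vanishing on the constant functions. -/
noncomputable def johnsonCocycle (G : Type u) [Group G] (F : Set (Subgroup G))
    (x : Fin 2 → Cos G F) : Linf (Cos G F) →ₗ[ℝ] ℝ :=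
  evalLinf (x 1) - evalLinf (x 0)


section Mean
variable {S : Type v}

/-- pullback along a map of sets -/
def compAcross {S : Type v} {T : Type w} (φ : S → T) : Linf T →ₗ[ℝ] Linf S where
  toFun f := ⟨fun s => (f : T → ℝ) (φ s), by
    obtain ⟨C, hC⟩ := f.2
    exact ⟨C, fun s => hC (φ s)⟩⟩
  map_add' f g := rfl
  map_smul' r f := rfl

def feas (f : Linf S) : Set (Linf S) :=
  {g | ∀ s, 0 ≤ (g : S → ℝ) s ∧ (g : S → ℝ) s ≤ (f : S → ℝ) s}

noncomputable def posPart (μ : Linf S →ₗ[ℝ] ℝ) (f : Linf S) : ℝ :=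
  sSup (μ '' feas f)

variable (μ : Linf S →ₗ[ℝ] ℝ) (C : ℝ)
  (hbdd : ∀ (f : Linf S) (B : ℝ), (∀ s, |(f : S → ℝ) s| ≤ B) → |μ f| ≤ C * B)

lemma zero_mem_feas {f : Linf S} (hf : ∀ s, 0 ≤ (f : S → ℝ) s) : 0 ∈ feas f :=
  fun s => ⟨le_rfl, hf s⟩

include hbdd

lemma bddAbove_posSet (f : Linf S) : BddAbove (μ '' feas f) := by
  obtain ⟨B, hB⟩ := f.2
  refine ⟨C * B, ?_⟩
  rintro r ⟨g, hg, rfl⟩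
  have hgB : ∀ s, |(g : S → ℝ) s| ≤ B := by
    intro s
    rw [abs_of_nonneg (hg s).1]
    exact le_trans (hg s).2 (le_trans (le_abs_self _) (hB s))
  exact (abs_le.mp (hbdd g B hgB)).2

lemma le_posPart {f g : Linf S} (hg : g ∈ feas f) : μ g ≤ posPart μ f :=
  le_csSup (bddAbove_posSet μ C hbdd f) ⟨g, hg, rfl⟩

lemma posPart_nonneg {f : Linf S} (hf : ∀ s, 0 ≤ (f : S → ℝ) s) : 0 ≤ posPart μ f := by
  have := le_posPart μ C hbdd (zero_mem_feas hf)
  simpa using this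

lemma posPart_add {f₁ f₂ : Linf S} (h₁ : ∀ s, 0 ≤ (f₁ : S → ℝ) s)
    (h₂ : ∀ s, 0 ≤ (f₂ : S → ℝ) s) :
    posPart μ (f₁ + f₂) = posPart μ f₁ + posPart μ f₂ := by
  have h₁₂ : ∀ s, 0 ≤ ((f₁ + f₂ : Linf S) : S → ℝ) s := fun s => add_nonneg (h₁ s) (h₂ s)
  apply le_antisymm
  · refine csSup_le ⟨μ 0, 0, zero_mem_feas h₁₂, rfl⟩ ?_
    rintro r ⟨g, hg, rfl⟩
    obtain ⟨B₁, hB₁⟩ := f₁.2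
    set g₁ : Linf S := ⟨fun s => min ((g : S → ℝ) s) ((f₁ : S → ℝ) s), by
      refine ⟨B₁, fun s => abs_le.mpr ⟨?_, ?_⟩⟩
      · have : (0:ℝ) ≤ min ((g : S → ℝ) s) ((f₁ : S → ℝ) s) := le_min (hg s).1 (h₁ s)
        have hB : (0:ℝ) ≤ B₁ := le_trans (abs_nonneg _) (hB₁ s)
        linarith
      · exact le_trans (min_le_right _ _) (le_trans (le_abs_self _) (hB₁ s))⟩ with hg₁def
    have hg₁ : g₁ ∈ feas f₁ := fun s => ⟨le_min (hg s).1 (h₁ s), min_le_right _ _⟩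
    have hg₂ : g - g₁ ∈ feas f₂ := by
      intro s
      have hgs := (hg s).2
      constructor
      · have : (g₁ : S → ℝ) s ≤ (g : S → ℝ) s := min_le_left _ _
        show (0:ℝ) ≤ (g : S → ℝ) s - (g₁ : S → ℝ) s
        linarith
      · show (g : S → ℝ) s - (g₁ : S → ℝ) s ≤ (f₂ : S → ℝ) s
        have : ((f₁ + f₂ : Linf S) : S → ℝ) s = (f₁ : S → ℝ) s + (f₂ : S → ℝ) s := rfl
        rw [this] at hgs
        rcases le_total ((g : S → ℝ) s) ((f₁ : S → ℝ) s) with h | h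
        · have : (g₁ : S → ℝ) s = (g : S → ℝ) s := min_eq_left h
          rw [this]; linarith [h₂ s]
        · have : (g₁ : S → ℝ) s = (f₁ : S → ℝ) s := min_eq_right h
          rw [this]; linarith
    have : g = g₁ + (g - g₁) := by abel
    rw [this, map_add]
    exact add_le_add (le_posPart μ C hbdd hg₁) (le_posPart μ C hbdd hg₂)
  · have key : ∀ r₁ ∈ μ '' feas f₁, ∀ r₂ ∈ μ '' feas f₂, r₁ + r₂ ≤ posPart μ (f₁ + f₂) := by
      rintro r₁ ⟨g₁, hg₁, rfl⟩ r₂ ⟨g₂, hg₂, rfl⟩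
      have hmem : g₁ + g₂ ∈ feas (f₁ + f₂) := fun s =>
        ⟨add_nonneg (hg₁ s).1 (hg₂ s).1, add_le_add (hg₁ s).2 (hg₂ s).2⟩
      have := le_posPart μ C hbdd hmem
      rwa [map_add] at this
    have step : ∀ r₁ ∈ μ '' feas f₁, r₁ ≤ posPart μ (f₁ + f₂) - posPart μ f₂ := by
      intro r₁ hr₁
      have h2 : posPart μ f₂ ≤ posPart μ (f₁ + f₂) - r₁ := by
        refine csSup_le ⟨μ 0, 0, zero_mem_feas h₂, rfl⟩ ?_
        intro r₂ hr₂
        have := key r₁ hr₁ r₂ hr₂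
        linarith
      linarith
    have h1 : posPart μ f₁ ≤ posPart μ (f₁ + f₂) - posPart μ f₂ :=
      csSup_le ⟨μ 0, 0, zero_mem_feas h₁, rfl⟩ step
    linarith

lemma posPart_smul {r : ℝ} (hr : 0 ≤ r) {f : Linf S} (hf : ∀ s, 0 ≤ (f : S → ℝ) s) :
    posPart μ (r • f) = r * posPart μ f := by
  rcases eq_or_lt_of_le hr with hr0 | hr0
  · subst hr0
    have : (0:ℝ) • f = 0 := zero_smul ℝ f
    rw [this, zero_mul]
    have hfeas : feas (0 : Linf S) = {0} := by
      ext g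
      constructor
      · intro hg
        have : g = 0 := by
          apply Subtype.ext
          funext s
          exact le_antisymm (hg s).2 (hg s).1
        simp [this]
      · rintro rfl
        exact fun s => ⟨le_rfl, le_rfl⟩
    unfold posPart
    rw [hfeas]
    simp
  · have hrf : ∀ s, 0 ≤ ((r • f : Linf S) : S → ℝ) s := fun s =>
      mul_nonneg hr (hf s)
    apply le_antisymm
    · refine csSup_le ⟨μ 0, 0, zero_mem_feas hrf, rfl⟩ ?_
      rintro x ⟨g, hg, rfl⟩
      have hmem : r⁻¹ • g ∈ feas f := by
        intro s
        have h1 := (hg s).1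
        have h2 := (hg s).2
        constructor
        · exact mul_nonneg (inv_nonneg.mpr hr) h1
        · show r⁻¹ * (g : S → ℝ) s ≤ (f : S → ℝ) s
          have h2' : (g : S → ℝ) s ≤ r * (f : S → ℝ) s := h2
          rw [inv_mul_le_iff₀ hr0]
          exact h2'
      have := le_posPart μ C hbdd hmem
      have h3 : μ (r⁻¹ • g) = r⁻¹ * μ g := map_smul μ r⁻¹ g
      rw [h3] at this
      calc μ g = r * (r⁻¹ * μ g) := by field_simp
        _ ≤ r * posPart μ f := by
            exact mul_le_mul_of_nonneg_left this hr
    · have step : posPart μ f ≤ r⁻¹ * posPart μ (r • f) := by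
        refine csSup_le ⟨μ 0, 0, zero_mem_feas hf, rfl⟩ ?_
        rintro x ⟨g, hg, rfl⟩
        have hmem : r • g ∈ feas (r • f) := by
          intro s
          exact ⟨mul_nonneg hr (hg s).1, mul_le_mul_of_nonneg_left (hg s).2 hr⟩
        have := le_posPart μ C hbdd hmem
        rw [map_smul] at this
        have : μ g ≤ r⁻¹ * posPart μ (r • f) := by
          rw [le_inv_mul_iff₀ hr0]
          exact this
        exact this
      calc r * posPart μ f ≤ r * (r⁻¹ * posPart μ (r • f)) :=
            mul_le_mul_of_nonneg_left step hr
        _ = posPart μ (r • f) := by field_simp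

omit hbdd in
lemma posPart_invariant {K : Type u} [Group K] [MulAction K S]
    (hinv : ∀ (k : K) (f : Linf S), μ (compL (fun s => k⁻¹ • s) f) = μ f)
    (k : K) (f : Linf S) :
    posPart μ (compL (fun s => k⁻¹ • s) f) = posPart μ f := by
  have himg : μ '' feas (compL (fun s => k⁻¹ • s) f) = μ '' feas f := by
    apply Set.Subset.antisymm
    · rintro x ⟨g, hg, rfl⟩
      refine ⟨compL (fun s => k • s) g, ?_, ?_⟩
      · intro s
        have := hg (k • s)
        constructor
        · exact this.1
        · have h2 := this.2
          show (g : S → ℝ) (k • s) ≤ (f : S → ℝ) s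
          have : ((compL (fun s => k⁻¹ • s) f : Linf S) : S → ℝ) (k • s)
              = (f : S → ℝ) (k⁻¹ • k • s) := rfl
          rw [this, inv_smul_smul] at h2
          exact h2
      · simpa using hinv k⁻¹ g
    · rintro x ⟨g, hg, rfl⟩
      refine ⟨compL (fun s => k⁻¹ • s) g, ?_, hinv k g⟩
      intro s
      exact ⟨(hg (k⁻¹ • s)).1, (hg (k⁻¹ • s)).2⟩
  unfold posPart
  rw [himg]

omit hbdd in
lemma constLinf_eq_smul (t : ℝ) : constLinf S t = t • constLinf S 1 := by
  apply Subtype.ext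
  funext s
  show t = t * 1
  rw [mul_one]

include hbdd in
lemma posPart_shift {g : Linf S} (hg : ∀ s, 0 ≤ (g : S → ℝ) s) {u : ℝ} (hu : 0 ≤ u) :
    posPart μ (g + constLinf S u) = posPart μ g + u * posPart μ (constLinf S 1) := by
  have hc : ∀ s, 0 ≤ ((constLinf S u : Linf S) : S → ℝ) s := fun _ => hu
  rw [posPart_add μ C hbdd hg hc, constLinf_eq_smul,
    posPart_smul μ C hbdd hu (fun _ => zero_le_one)]

theorem invariantMean_of_functional {K : Type u} [Group K] [MulAction K S] [Nonempty S]
    (hone : μ (constLinf S 1) = 1)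
    (hinv : ∀ (k : K) (f : Linf S), μ (compL (fun s => k⁻¹ • s) f) = μ f) :
    InvariantMean K S := by
  classical
  set P1 : ℝ := posPart μ (constLinf S 1) with hP1def
  have hP1 : 1 ≤ P1 := by
    have hmem : constLinf S 1 ∈ feas (constLinf S 1) := fun s => ⟨zero_le_one, le_rfl⟩
    have := le_posPart μ C hbdd hmem
    rwa [hone] at this
  have hP1pos : 0 < P1 := lt_of_lt_of_le one_pos hP1
  -- bound choice
  set Bd : Linf S → ℝ := fun f => Classical.choose f.2 with hBd
  have hBdspec : ∀ f : Linf S, ∀ s, |(f : S → ℝ) s| ≤ Bd f := fun f => Classical.choose_spec f.2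
  have hBdnn : ∀ f : Linf S, 0 ≤ Bd f := fun f =>
    le_trans (abs_nonneg _) (hBdspec f (Classical.arbitrary S))
  have hBdshift : ∀ f : Linf S, ∀ s, 0 ≤ (f : S → ℝ) s + Bd f := by
    intro f s
    have := abs_le.mp (hBdspec f s)
    linarith [this.1]
  set T : Linf S → ℝ := fun f => posPart μ (f + constLinf S (Bd f)) - Bd f * P1 with hT
  have T_spec : ∀ (f : Linf S) (t : ℝ), (∀ s, 0 ≤ (f : S → ℝ) s + t) →
      T f = posPart μ (f + constLinf S t) - t * P1 := by
    have claim : ∀ (f : Linf S) (t₁ t₂ : ℝ), t₁ ≤ t₂ → (∀ s, 0 ≤ (f : S → ℝ) s + t₁) →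
        posPart μ (f + constLinf S t₂) - t₂ * P1
          = posPart μ (f + constLinf S t₁) - t₁ * P1 := by
      intro f t₁ t₂ hle hnn
      have heq : f + constLinf S t₂ = (f + constLinf S t₁) + constLinf S (t₂ - t₁) := by
        apply Subtype.ext
        funext s
        show (f : S → ℝ) s + t₂ = ((f : S → ℝ) s + t₁) + (t₂ - t₁)
        ring
      rw [heq, posPart_shift μ C hbdd hnn (by linarith)]
      ring
    intro f t hnn
    rcases le_total (Bd f) t with h | h
    · rw [hT]
      exact (claim f (Bd f) t h (hBdshift f)).symm
    · exact claim f t (Bd f) h hnn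
  have T_add : ∀ f g : Linf S, T (f + g) = T f + T g := by
    intro f g
    have hnn : ∀ s, 0 ≤ ((f + g : Linf S) : S → ℝ) s + (Bd f + Bd g) := by
      intro s
      have h1 := hBdshift f s
      have h2 := hBdshift g s
      show 0 ≤ ((f : S → ℝ) s + (g : S → ℝ) s) + (Bd f + Bd g)
      linarith
    rw [T_spec (f + g) (Bd f + Bd g) hnn]
    have heq : (f + g) + constLinf S (Bd f + Bd g)
        = (f + constLinf S (Bd f)) + (g + constLinf S (Bd g)) := by
      apply Subtype.ext
      funext s
      show ((f : S → ℝ) s + (g : S → ℝ) s) + (Bd f + Bd g)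
        = ((f : S → ℝ) s + Bd f) + ((g : S → ℝ) s + Bd g)
      ring
    rw [heq, posPart_add μ C hbdd (hBdshift f) (hBdshift g)]
    rw [hT]
    ring
  have T_smul_nn : ∀ (r : ℝ), 0 ≤ r → ∀ f : Linf S, T (r • f) = r * T f := by
    intro r hr f
    have hnn : ∀ s, 0 ≤ ((r • f : Linf S) : S → ℝ) s + r * Bd f := by
      intro s
      show 0 ≤ r * (f : S → ℝ) s + r * Bd f
      have := hBdshift f s
      nlinarith
    rw [T_spec (r • f) (r * Bd f) hnn]
    have heq : r • f + constLinf S (r * Bd f) = r • (f + constLinf S (Bd f)) := by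
      apply Subtype.ext
      funext s
      show r * (f : S → ℝ) s + r * Bd f = r * ((f : S → ℝ) s + Bd f)
      ring
    rw [heq, posPart_smul μ C hbdd hr (hBdshift f), hT]
    ring
  have T_neg : ∀ f : Linf S, T (-f) = - T f := by
    intro f
    have hnn : ∀ s, 0 ≤ ((-f : Linf S) : S → ℝ) s + Bd f := by
      intro s
      have := abs_le.mp (hBdspec f s)
      show 0 ≤ -(f : S → ℝ) s + Bd f
      linarith [this.2]
    have hsum : (f + constLinf S (Bd f)) + (-f + constLinf S (Bd f))
        = constLinf S (2 * Bd f) := by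
      apply Subtype.ext
      funext s
      show ((f : S → ℝ) s + Bd f) + (-(f : S → ℝ) s + Bd f) = 2 * Bd f
      ring
    have hadd := posPart_add (f₁ := f + constLinf S (Bd f)) (f₂ := -f + constLinf S (Bd f))
      μ C hbdd (hBdshift f) hnn
    rw [hsum] at hadd
    have hconst : posPart μ (constLinf S (2 * Bd f)) = (2 * Bd f) * P1 := by
      rw [constLinf_eq_smul, posPart_smul μ C hbdd (by linarith [hBdnn f]) (fun _ => zero_le_one)]
    rw [hconst] at hadd
    have h1 : T f = posPart μ (f + constLinf S (Bd f)) - Bd f * P1 := rfl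
    have h2 : T (-f) = posPart μ (-f + constLinf S (Bd f)) - Bd f * P1 :=
      T_spec (-f) (Bd f) hnn
    rw [h1, h2]
    linarith
  have T_smul : ∀ (r : ℝ) (f : Linf S), T (r • f) = r * T f := by
    intro r f
    rcases le_or_gt 0 r with hr | hr
    · exact T_smul_nn r hr f
    · have h1 : r • f = (-r) • (-f) := by
        rw [neg_smul_neg]
      rw [h1, T_smul_nn (-r) (by linarith) (-f), T_neg]
      ring
  have T_pos : ∀ f : Linf S, (∀ s, 0 ≤ (f : S → ℝ) s) → 0 ≤ T f := by
    intro f hf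
    have h0 : ∀ s, 0 ≤ (f : S → ℝ) s + 0 := fun s => by simpa using hf s
    rw [T_spec f 0 h0]
    have heq : f + constLinf S 0 = f := by
      apply Subtype.ext
      funext s
      show (f : S → ℝ) s + 0 = (f : S → ℝ) s
      ring
    rw [heq]
    have := posPart_nonneg μ C hbdd hf
    linarith
  have T_one : T (constLinf S 1) = P1 := by
    have h0 : ∀ s, 0 ≤ ((constLinf S 1 : Linf S) : S → ℝ) s + 0 := fun s => by
      show (0:ℝ) ≤ 1 + 0
      norm_num
    rw [T_spec (constLinf S 1) 0 h0]
    have heq : constLinf S 1 + constLinf S 0 = constLinf S 1 := by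
      apply Subtype.ext
      funext s
      show (1:ℝ) + 0 = 1
      ring
    rw [heq, hP1def]
    ring
  have T_inv : ∀ (k : K) (f : Linf S), T (compL (fun s => k⁻¹ • s) f) = T f := by
    intro k f
    have hnn : ∀ s, 0 ≤ ((compL (fun s => k⁻¹ • s) f : Linf S) : S → ℝ) s + Bd f := by
      intro s
      exact hBdshift f (k⁻¹ • s)
    rw [T_spec _ (Bd f) hnn]
    have heq : compL (fun s => k⁻¹ • s) f + constLinf S (Bd f)
        = compL (fun s => k⁻¹ • s) (f + constLinf S (Bd f)) := by
      apply Subtype.ext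
      funext s
      rfl
    rw [heq, posPart_invariant μ hinv, hT]
  -- assemble
  refine ⟨{ toFun := fun f => P1⁻¹ * T f
            map_add' := fun f g => by
              show P1⁻¹ * T (f + g) = P1⁻¹ * T f + P1⁻¹ * T g
              rw [T_add]; ring
            map_smul' := fun r f => by
              show P1⁻¹ * T (r • f) = r * (P1⁻¹ * T f)
              rw [T_smul]; ring }, ?_, ?_, ?_⟩
  · show P1⁻¹ * T (constLinf S 1) = 1
    rw [T_one]
    field_simp
  · intro f hf
    have := T_pos f hf
    have h2 : 0 ≤ P1⁻¹ := inv_nonneg.mpr (le_of_lt hP1pos)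
    exact mul_nonneg h2 this
  · intro k f
    show P1⁻¹ * T (compL (fun s => k⁻¹ • s) f) = P1⁻¹ * T f
    rw [T_inv]

omit hbdd in
theorem invariantMean_map {K : Type u} [Group K] {T : Type w}
    [MulAction K S] [MulAction K T] (φ : S → T)
    (hφ : ∀ (k : K) (s : S), φ (k • s) = k • φ s)
    (h : InvariantMean K S) : InvariantMean K T := by
  obtain ⟨m, h1, hpos, hinvm⟩ := h
  refine ⟨m.comp (compAcross φ), ?_, ?_, ?_⟩
  · have : compAcross φ (constLinf T 1) = constLinf S 1 := rfl
    show m (compAcross φ (constLinf T 1)) = 1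
    rw [this, h1]
  · intro f hf
    exact hpos _ (fun s => hf (φ s))
  · intro k f
    have hcomm : compAcross φ (compL (fun t => k⁻¹ • t) f)
        = compL (fun s => k⁻¹ • s) (compAcross φ f) := by
      apply Subtype.ext
      funext s
      show (f : T → ℝ) (k⁻¹ • φ s) = (f : T → ℝ) (φ (k⁻¹ • s))
      rw [hφ k⁻¹ s]
    show m (compAcross φ (compL (fun t => k⁻¹ • t) f)) = m (compAcross φ f)
    rw [hcomm, hinvm]

end Mean



section Orbits

variable (F : Set (Subgroup G))

noncomputable def repPt (H : Subgroup G) (x : Cos G F) : Cos G F :=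
  (Quotient.mk (MulAction.orbitRel H (Cos G F)) x).out

lemma exists_smul_repPt (H : Subgroup G) (x : Cos G F) :
    ∃ h : H, h • repPt F H x = x := by
  have h1 : (MulAction.orbitRel H (Cos G F)) (repPt F H x) x := Quotient.mk_out x
  rw [MulAction.orbitRel_apply, MulAction.mem_orbit_iff] at h1
  obtain ⟨h, hh⟩ := h1
  exact ⟨h⁻¹, by rw [← hh]; exact inv_smul_smul h x⟩

lemma stabilizer_mem_restricted (hF : IsFamily F) (H : Subgroup G) (x : Cos G F) :
    MulAction.stabilizer H x ∈ restrictedFamily F H := by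
  obtain ⟨⟨L, hL⟩, q⟩ := x
  refine ⟨Subgroup.map ((MulAut.conj q.out).toMonoidHom) L, hF.2.1 L hL q.out, ?_⟩
  ext h
  rw [Subgroup.mem_subgroupOf, MulAction.mem_stabilizer_iff, Subgroup.mem_map]
  have hsmul : h • (⟨⟨L, hL⟩, q⟩ : Cos G F) = ⟨⟨L, hL⟩, (h : G) • q⟩ := rfl
  change (⟨⟨L, hL⟩, (h : G) • q⟩ : Cos G F) = ⟨⟨L, hL⟩, q⟩ ↔ _
  constructor
  · intro he
    have h2 : (h : G) • q = q := eq_of_heq (Sigma.mk.inj_iff.mp he).2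
    refine ⟨q.out⁻¹ * (h : G) * q.out, ?_, ?_⟩
    · have h3 : (QuotientGroup.mk ((h : G) * q.out) : G ⧸ L) = QuotientGroup.mk q.out := by
        show (h : G) • (QuotientGroup.mk q.out : G ⧸ L) = QuotientGroup.mk q.out
        rw [QuotientGroup.out_eq']
        exact h2
      have h4 : ((h : G) * q.out)⁻¹ * q.out ∈ L := QuotientGroup.eq.mp h3
      have h5 : q.out⁻¹ * (h : G) * q.out = (((h : G) * q.out)⁻¹ * q.out)⁻¹ := by group
      rw [h5]
      exact inv_mem h4
    · show q.out * (q.out⁻¹ * (h : G) * q.out) * q.out⁻¹ = (h : G)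
      group
  · rintro ⟨y, hy, hconj⟩
    have hconj' : q.out * y * q.out⁻¹ = (h : G) := hconj
    have h6 : q.out⁻¹ * (h : G) * q.out = y := by rw [← hconj']; group
    have h2 : (h : G) • q = q := by
      conv_lhs => rw [← QuotientGroup.out_eq' q]
      conv_rhs => rw [← QuotientGroup.out_eq' q]
      show (QuotientGroup.mk ((h : G) * q.out) : G ⧸ L) = QuotientGroup.mk q.out
      rw [QuotientGroup.eq]
      have h7 : ((h : G) * q.out)⁻¹ * q.out = (q.out⁻¹ * (h : G) * q.out)⁻¹ := by group
      rw [h7, h6]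
      exact inv_mem hy
    rw [h2]

noncomputable def toRestricted (hF : IsFamily F) (H : Subgroup G) (x : Cos G F) :
    Cos H (restrictedFamily F H) :=
  ⟨⟨MulAction.stabilizer H (repPt F H x),
      stabilizer_mem_restricted F hF H (repPt F H x)⟩,
    QuotientGroup.mk (exists_smul_repPt F H x).choose⟩

lemma toRestricted_spec (hF : IsFamily F) (H : Subgroup G) (x : Cos G F)
    (k : H) (hk : k • repPt F H x = x) :
    toRestricted F hF H x
      = ⟨⟨MulAction.stabilizer H (repPt F H x),
          stabilizer_mem_restricted F hF H (repPt F H x)⟩,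
        QuotientGroup.mk k⟩ := by
  unfold toRestricted
  have hch := (exists_smul_repPt F H x).choose_spec
  have hmem : (exists_smul_repPt F H x).choose⁻¹ * k
      ∈ MulAction.stabilizer H (repPt F H x) := by
    rw [MulAction.mem_stabilizer_iff, mul_smul]
    exact inv_smul_eq_iff.mpr (hk.trans hch.symm)
  have heq : (QuotientGroup.mk (exists_smul_repPt F H x).choose
        : H ⧸ MulAction.stabilizer H (repPt F H x))
      = QuotientGroup.mk k := QuotientGroup.eq.mpr hmem
  rw [heq]

lemma cosPair_congr {K : Type u} [Group K] {𝒦 : Set (Subgroup K)} {A B : Subgroup K}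
    (hAB : A = B) (hA : A ∈ 𝒦) (hB : B ∈ 𝒦) (a : K) :
    (⟨⟨A, hA⟩, QuotientGroup.mk a⟩ : Cos K 𝒦) = ⟨⟨B, hB⟩, QuotientGroup.mk a⟩ := by
  subst hAB
  rfl

lemma toRestricted_equivariant (hF : IsFamily F) (H : Subgroup G) (k : H) (x : Cos G F) :
    toRestricted F hF H (k • x) = k • toRestricted F hF H x := by
  obtain ⟨j, hj⟩ := exists_smul_repPt F H x
  have hq : (Quotient.mk (MulAction.orbitRel H (Cos G F)) (k • x))
      = Quotient.mk (MulAction.orbitRel H (Cos G F)) x := by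
    exact Quotient.sound ⟨k, rfl⟩
  have hrep : repPt F H (k • x) = repPt F H x := by
    unfold repPt
    rw [hq]
  rw [toRestricted_spec F hF H x j hj,
      toRestricted_spec F hF H (k • x) (k * j) (by rw [hrep]; exact (mul_smul k j _).trans (congrArg (k • ·) hj))]
  have hstab : MulAction.stabilizer H (repPt F H (k • x))
      = MulAction.stabilizer H (repPt F H x) := by rw [hrep]
  refine (cosPair_congr hstab
      (stabilizer_mem_restricted F hF H (repPt F H (k • x)))
      (stabilizer_mem_restricted F hF H (repPt F H x)) (k * j)).trans ?_
  rfl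

end Orbits


set_option maxHeartbeats 2000000 in
/-- Theorem 4.8, (iv) ⇒ (i).  Let `F ⊆ G'` be families of
subgroups of `G` and let `Q^#` be the dual of `Q = ℓ∞(G/F)/ℝ·1` (realized as the
functionals on `ℓ∞(G/F)` vanishing on constants).  If the relative Johnson class
`[J_F] ∈ H¹_{F,b}(G; Q^#)` lies in the image of the canonical map
`H¹_{G',b}(G; Q^#) → H¹_{F,b}(G; Q^#)` — i.e. there are a bounded `G`-equivariant
cocycle `c` on `(G/G')²` and a bounded `G`-equivariant `b` on `G/F` with
`c|_{(G/F)²} = J_F + δ⁰b` — then every `H ∈ G'` is amenable relative to `F|_H`. -/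
theorem johnson_class_implies_relatively_amenable (G : Type u) [Group G]
    (F F' : Set (Subgroup G)) (hF : IsFamily F) (hF' : IsFamily F') (hFF' : F ⊆ F')
    (c : (Fin 2 → Cos G F') → (Linf (Cos G F) →ₗ[ℝ] ℝ))
    (hcconst : ∀ (x : Fin 2 → Cos G F') (r : ℝ), c x (constLinf (Cos G F) r) = 0)
    (hcbdd : ∃ C : ℝ, ∀ (x : Fin 2 → Cos G F') (f : Linf (Cos G F)) (B : ℝ),
      (∀ s, |(f : Cos G F → ℝ) s| ≤ B) → |c x f| ≤ C * B)
    (hcequiv : ∀ (g : G) (x : Fin 2 → Cos G F'),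
      c (fun j => g • x j) = (c x).comp (compL (fun s => g • s)))
    (hccocycle : delta 1 c = 0)
    (b : (Fin 1 → Cos G F) → (Linf (Cos G F) →ₗ[ℝ] ℝ))
    (hbconst : ∀ (x : Fin 1 → Cos G F) (r : ℝ), b x (constLinf (Cos G F) r) = 0)
    (hbbdd : ∃ C : ℝ, ∀ (x : Fin 1 → Cos G F) (f : Linf (Cos G F)) (B : ℝ),
      (∀ s, |(f : Cos G F → ℝ) s| ≤ B) → |b x f| ≤ C * B)
    (hbequiv : ∀ (g : G) (x : Fin 1 → Cos G F),
      b (fun j => g • x j) = (b x).comp (compL (fun s => g • s)))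
    (hrestr : ∀ x : Fin 2 → Cos G F,
      c (fun j => inclCos hFF' (x j)) = johnsonCocycle G F x + delta 0 b x) :
    ∀ H : Subgroup G, H ∈ F' →
      RelativelyAmenable H (restrictedFamily F H) := by
  intro H hH
  obtain ⟨L₀, hL₀⟩ := hF.1
  obtain ⟨Cb, hCb⟩ := hbbdd
  obtain ⟨Cc, hCc⟩ := hcbdd
  set y₀ : Cos G F := ⟨⟨L₀, hL₀⟩, QuotientGroup.mk 1⟩ with hy₀
  set e : Cos G F' := ⟨⟨H, hH⟩, QuotientGroup.mk 1⟩ with he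
  set ν : Cos G F → (Linf (Cos G F) →ₗ[ℝ] ℝ) :=
    fun y => evalLinf y + b ![y] - c ![e, inclCos hFF' y] with hν
  -- independence of the base point
  have key : ∀ y y' : Cos G F, ν y = ν y' := by
    intro y y'
    set iy : Cos G F' := inclCos hFF' y with hiy
    set iy' : Cos G F' := inclCos hFF' y' with hiy'
    have e0 : (fun j => (![e, iy, iy'] : Fin 3 → Cos G F') ((0 : Fin 3).succAbove j))
        = ![iy, iy'] := by funext j; fin_cases j <;> rfl
    have e1 : (fun j => (![e, iy, iy'] : Fin 3 → Cos G F') ((1 : Fin 3).succAbove j))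
        = ![e, iy'] := by funext j; fin_cases j <;> rfl
    have e2 : (fun j => (![e, iy, iy'] : Fin 3 → Cos G F') ((2 : Fin 3).succAbove j))
        = ![e, iy] := by funext j; fin_cases j <;> rfl
    have h3 : (∑ i : Fin 3, ((-1 : ℝ) ^ (i : ℕ))
        • c (fun j => (![e, iy, iy'] : Fin 3 → Cos G F') (i.succAbove j))) = 0 :=
      congrFun hccocycle ![e, iy, iy']
    rw [Fin.sum_univ_three, e0, e1, e2] at h3
    norm_num at h3
    -- h3 : c ![iy, iy'] - c ![e, iy'] + c ![e, iy] = 0 (hopefully)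
    have hr := hrestr ![y, y']
    have er : (fun j => inclCos hFF' ((![y, y'] : Fin 2 → Cos G F) j)) = ![iy, iy'] := by
      funext j; fin_cases j <;> rfl
    rw [er] at hr
    have ej : johnsonCocycle G F ![y, y'] = evalLinf y' - evalLinf y := rfl
    have d0 : (fun j => (![y, y'] : Fin 2 → Cos G F) ((0 : Fin 2).succAbove j))
        = ![y'] := by funext j; fin_cases j <;> rfl
    have d1 : (fun j => (![y, y'] : Fin 2 → Cos G F) ((1 : Fin 2).succAbove j))
        = ![y] := by funext j; fin_cases j <;> rfl
    have ed : delta 0 b ![y, y'] = b ![y'] - b ![y] := by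
      have ed' : delta 0 b ![y, y'] = ∑ i : Fin 2, ((-1 : ℝ) ^ (i : ℕ))
          • b (fun j => (![y, y'] : Fin 2 → Cos G F) (i.succAbove j)) := rfl
      rw [ed', Fin.sum_univ_two, d0, d1]
      norm_num
      abel
      module
    rw [ej, ed] at hr
    have h4 : c ![e, iy'] = c ![iy, iy'] + c ![e, iy] := by
      have h5 : c ![e, iy'] - (c ![iy, iy'] + c ![e, iy])
          = -(c ![iy, iy'] + -c ![e, iy'] + c ![e, iy]) := by abel
      have h3' : c ![iy, iy'] + -c ![e, iy'] + c ![e, iy] = 0 := by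
        convert h3 using 3
        exact (neg_one_smul ℝ (c ![e, iy'])).symm
      rw [h3', neg_zero] at h5
      exact sub_eq_zero.mp h5
    show evalLinf y + b ![y] - c ![e, iy] = evalLinf y' + b ![y'] - c ![e, iy']
    rw [h4, hr]
    abel
  -- the functional
  have hbddν : ∀ (f : Linf (Cos G F)) (B : ℝ),
      (∀ s, |(f : Cos G F → ℝ) s| ≤ B) → |ν y₀ f| ≤ (1 + Cb + Cc) * B := by
    intro f B hB
    have h1 : |evalLinf y₀ f| ≤ B := hB y₀
    have h2 : |b ![y₀] f| ≤ Cb * B := hCb ![y₀] f B hB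
    have h3 : |c ![e, inclCos hFF' y₀] f| ≤ Cc * B := hCc ![e, inclCos hFF' y₀] f B hB
    have hval : ν y₀ f
        = evalLinf y₀ f + b ![y₀] f - c ![e, inclCos hFF' y₀] f := rfl
    rw [hval]
    rw [abs_le] at h1 h2 h3 ⊢
    constructor <;> nlinarith [h1.1, h1.2, h2.1, h2.2, h3.1, h3.2]
  have honeν : ν y₀ (constLinf (Cos G F) 1) = 1 := by
    have hval : ν y₀ (constLinf (Cos G F) 1)
        = evalLinf y₀ (constLinf (Cos G F) 1) + b ![y₀] (constLinf (Cos G F) 1)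
          - c ![e, inclCos hFF' y₀] (constLinf (Cos G F) 1) := rfl
    rw [hval, hbconst, hcconst]
    show (1 : ℝ) + 0 - 0 = 1
    norm_num
  have hinvν : ∀ (k : H) (f : Linf (Cos G F)),
      ν y₀ (compL (fun s => k⁻¹ • s) f) = ν y₀ f := by
    intro k f
    set g : G := (k : G)⁻¹ with hg
    have hfun : (fun s : Cos G F => k⁻¹ • s) = (fun s : Cos G F => g • s) := rfl
    rw [hfun]
    have hb1 : b ![y₀] (compL (fun s => g • s) f) = b ![g • y₀] f := by
      have h1 := hbequiv g ![y₀]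
      have h2 : (fun j => g • (![y₀] : Fin 1 → Cos G F) j) = ![g • y₀] := by
        funext j; fin_cases j <;> rfl
      rw [h2] at h1
      exact (congrArg (fun φ => φ f) h1).symm
    have hge : g • e = e := by
      show (⟨⟨H, hH⟩, g • QuotientGroup.mk 1⟩ : Cos G F') = ⟨⟨H, hH⟩, QuotientGroup.mk 1⟩
      have hq : g • (QuotientGroup.mk 1 : G ⧸ H) = QuotientGroup.mk 1 := by
        show (QuotientGroup.mk (g * 1) : G ⧸ H) = QuotientGroup.mk 1
        rw [QuotientGroup.eq]
        have hgk : (g * 1)⁻¹ * 1 = (k : G) := by rw [hg]; group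
        rw [hgk]
        exact k.2
      rw [hq]
    have hc1 : c ![e, inclCos hFF' y₀] (compL (fun s => g • s) f)
        = c ![e, inclCos hFF' (g • y₀)] f := by
      have h1 := hcequiv g ![e, inclCos hFF' y₀]
      have h2 : (fun j => g • (![e, inclCos hFF' y₀] : Fin 2 → Cos G F') j)
          = ![e, inclCos hFF' (g • y₀)] := by
        funext j
        fin_cases j
        · exact hge
        · rfl
      rw [h2] at h1
      exact (congrArg (fun φ => φ f) h1).symm
    have hstep : ν y₀ (compL (fun s => g • s) f) = ν (g • y₀) f := by
      show evalLinf y₀ (compL (fun s => g • s) f)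
            + b ![y₀] (compL (fun s => g • s) f)
            - c ![e, inclCos hFF' y₀] (compL (fun s => g • s) f)
          = evalLinf (g • y₀) f + b ![g • y₀] f - c ![e, inclCos hFF' (g • y₀)] f
      rw [hb1, hc1]
      rfl
    rw [hstep, key (g • y₀) y₀]
  have hne : Nonempty (Cos G F) := ⟨y₀⟩
  have hmean : InvariantMean H (Cos G F) :=
    invariantMean_of_functional (ν y₀) (1 + Cb + Cc) hbddν honeν hinvν
  exact invariantMean_map (toRestricted F hF H) (toRestricted_equivariant F hF H) hmean


end RelBdd
end

section
/- Let G be a group and F a family of subgroups of G. The map g ↦ g·(coset of the trivial subgroup) is a G-equivariant embedding of the regular G-set G into G/F, and precomposition with it gives a cochain map from bounded G-equivariant W^#-valued cochains on (G/F)^{•+1} to the ordinary bounded cochain complex of G (bounded G-equivariant cochains on G^{•+1}). Suppose that for every normed ℝG-module W this map induces a bijection H¹_{F,b}(G;W^#) → H¹_b(G;W^#). Then every subgroup H ∈ F is amenable, i.e. admits a left-invariant mean on ℓ∞(H). -/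
open scoped BigOperators

universe u v w

namespace RelBdd

variable {G : Type u} [Group G]

/-- The `G`-equivariant embedding of the regular `G`-set `G` into `G/F`,
`g ↦ g • (coset of the trivial subgroup)`. -/
def trivEmb {G : Type u} [Group G] {F : Set (Subgroup G)}
    (hbot : (⊥ : Subgroup G) ∈ F) : G → Cos G F :=
  fun g => ⟨⟨⊥, hbot⟩, QuotientGroup.mk g⟩


section PartA
set_option synthInstance.maxHeartbeats 1000000
set_option maxHeartbeats 1000000

variable (G : Type u) [Group G]

/-- `ℓ∞(G)` as a normed space. -/
abbrev W0 : Type u := lp (fun _ : G => ℝ) ⊤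

/-- The constant function `1` in `ℓ∞(G)`. -/
noncomputable def const1 : W0 G :=
  ⟨fun _ => (1 : ℝ), memℓp_infty ⟨1, by rintro x ⟨i, rfl⟩; simp⟩⟩

/-- The line of constants in `ℓ∞(G)`. -/
noncomputable def Kc : Submodule ℝ (W0 G) := ℝ ∙ (const1 G)

instance : FiniteDimensional ℝ (Kc G) := by unfold Kc; infer_instance

instance : IsClosed ((Kc G) : Set (W0 G)) :=
  Submodule.closed_of_finiteDimensional _

/-- The quotient `ℓ∞(G)/ℝ`. -/
abbrev WW : Type u := W0 G ⧸ Kc G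

variable {G}

/-- Left translation on `ℓ∞(G)`. -/
noncomputable def translp (g : G) : W0 G →ₗ[ℝ] W0 G where
  toFun f := ⟨fun x => f (g⁻¹ * x),
    memℓp_infty (BddAbove.mono
      (by rintro r ⟨x, rfl⟩; exact ⟨g⁻¹ * x, rfl⟩)
      (memℓp_infty_iff.1 (lp.memℓp f)))⟩
  map_add' f₁ f₂ := lp.ext rfl
  map_smul' r f := lp.ext rfl

lemma translp_apply (g : G) (f : W0 G) (x : G) : (translp g f : ∀ _ : G, ℝ) x = f (g⁻¹ * x) := rfl

noncomputable instance : SMul G (W0 G) := ⟨fun g f => translp g f⟩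

lemma smul_W0_apply (g : G) (f : W0 G) (x : G) : ((g • f : W0 G) : ∀ _ : G, ℝ) x = f (g⁻¹ * x) := rfl

noncomputable instance : MulAction G (W0 G) where
  one_smul f := lp.ext (funext fun x => by rw [smul_W0_apply]; simp)
  mul_smul g h f := lp.ext (funext fun x => by
    rw [smul_W0_apply, smul_W0_apply, smul_W0_apply, mul_inv_rev, mul_assoc])

noncomputable instance : DistribMulAction G (W0 G) where
  smul_zero g := map_zero (translp g)
  smul_add g := map_add (translp g)

instance : SMulCommClass G ℝ (W0 G) :=
  ⟨fun g r f => ((translp g).map_smul r f).symm ▸ rfl⟩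

lemma norm_W0_smul (g : G) (f : W0 G) : ‖g • f‖ = ‖f‖ := by
  have key : ∀ (g : G) (f : W0 G), ‖g • f‖ ≤ ‖f‖ := by
    intro g f
    rcases le_or_gt ‖f‖ 0 with h | h
    · have : f = 0 := by
        rwa [← norm_le_zero_iff]
      simp [this]
    · refine lp.norm_le_of_forall_le h.le fun x => ?_
      rw [smul_W0_apply]
      exact lp.norm_apply_le_norm ENNReal.top_ne_zero f _
  refine le_antisymm (key g f) ?_
  have h2 := key g⁻¹ (g • f)
  rwa [← mul_smul, inv_mul_cancel, one_smul] at h2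

lemma smul_const1 (g : G) : g • (const1 G) = const1 G := lp.ext rfl

lemma Kc_stable (g : G) : ∀ v ∈ Kc G, g • v ∈ Kc G := by
  intro v hv
  obtain ⟨r, rfl⟩ := Submodule.mem_span_singleton.1 hv
  rw [smul_comm, smul_const1]
  exact Submodule.smul_mem _ _ (Submodule.mem_span_singleton_self _)

/-- The translation action on the quotient. -/
noncomputable def transQ (g : G) : WW G →ₗ[ℝ] WW G :=
  Submodule.mapQ (Kc G) (Kc G) (translp g) (fun v hv => Kc_stable g v hv)

lemma transQ_mk (g : G) (f : W0 G) :
    transQ g (Submodule.Quotient.mk f) = Submodule.Quotient.mk (g • f) := rfl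

noncomputable instance : SMul G (WW G) := ⟨fun g w => transQ g w⟩

lemma smul_WW_mk (g : G) (f : W0 G) :
    g • (Submodule.Quotient.mk f : WW G) = Submodule.Quotient.mk (g • f) :=
  transQ_mk g f

noncomputable instance : MulAction G (WW G) where
  one_smul w := by
    obtain ⟨f, rfl⟩ := Submodule.Quotient.mk_surjective _ w
    rw [smul_WW_mk, one_smul]
  mul_smul g h w := by
    obtain ⟨f, rfl⟩ := Submodule.Quotient.mk_surjective _ w
    rw [smul_WW_mk, smul_WW_mk, smul_WW_mk, mul_smul]

noncomputable instance : DistribMulAction G (WW G) where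
  smul_zero g := map_zero (transQ g)
  smul_add g := map_add (transQ g)

instance : SMulCommClass G ℝ (WW G) :=
  ⟨fun g r w => ((transQ g).map_smul r w).symm ▸ rfl⟩

lemma norm_WW_smul (g : G) (w : WW G) : ‖g • w‖ = ‖w‖ := by
  have key : ∀ (g : G) (w : WW G), ‖g • w‖ ≤ ‖w‖ := by
    intro g w
    refine le_of_forall_pos_le_add fun ε hε => ?_
    obtain ⟨f, rfl, hf⟩ := Submodule.Quotient.norm_mk_lt w hε
    rw [smul_WW_mk]
    calc ‖(Submodule.Quotient.mk (g • f) : WW G)‖ ≤ ‖g • f‖ :=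
      Submodule.Quotient.norm_mk_le _ _
    _ = ‖f‖ := norm_W0_smul g f
    _ ≤ _ := hf.le
  refine le_antisymm (key g w) ?_
  have h2 := key g⁻¹ (g • w)
  rwa [← mul_smul, inv_mul_cancel, one_smul] at h2

/-- Evaluation at a point, as a linear functional on `ℓ∞(G)`. -/
def evlin (x : G) : W0 G →ₗ[ℝ] ℝ where
  toFun f := f x
  map_add' f₁ f₂ := rfl
  map_smul' r f := rfl

/-- The difference-of-evaluations functional on the quotient `ℓ∞(G)/ℝ`. -/
noncomputable def dev (x₀ x₁ : G) : WW G →L[ℝ] ℝ :=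
  LinearMap.mkContinuous
    ((Kc G).liftQ (evlin x₁ - evlin x₀) (by
      intro v hv
      obtain ⟨r, rfl⟩ := Submodule.mem_span_singleton.1 hv
      simp only [LinearMap.mem_ker, map_smul, LinearMap.sub_apply]
      have h1 : evlin x₁ (const1 G) = 1 := rfl
      have h0 : evlin x₀ (const1 G) = 1 := rfl
      rw [h1, h0]
      simp))
    2 (by
      intro w
      refine le_of_forall_pos_le_add fun ε hε => ?_
      have hε2 : (0:ℝ) < ε / 2 := by linarith
      obtain ⟨f, rfl, hf⟩ := Submodule.Quotient.norm_mk_lt w hε2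
      rw [Submodule.liftQ_apply]
      have h1 : ‖f x₁‖ ≤ ‖f‖ := lp.norm_apply_le_norm ENNReal.top_ne_zero f _
      have h0 : ‖f x₀‖ ≤ ‖f‖ := lp.norm_apply_le_norm ENNReal.top_ne_zero f _
      have : ‖(evlin x₁ - evlin x₀) f‖ ≤ 2 * ‖f‖ := by
        have : (evlin x₁ - evlin x₀) f = f x₁ - f x₀ := rfl
        rw [this]
        calc ‖f x₁ - f x₀‖ ≤ ‖f x₁‖ + ‖f x₀‖ := norm_sub_le _ _
        _ ≤ 2 * ‖f‖ := by linarith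
      calc ‖(evlin x₁ - evlin x₀) f‖ ≤ 2 * ‖f‖ := this
      _ ≤ 2 * (‖(Submodule.Quotient.mk f : WW G)‖ + ε / 2) := by
          have := hf.le
          nlinarith [norm_nonneg f]
      _ = 2 * ‖(Submodule.Quotient.mk f : WW G)‖ + ε := by ring)

lemma dev_mk (x₀ x₁ : G) (f : W0 G) :
    dev x₀ x₁ (Submodule.Quotient.mk f) = f x₁ - f x₀ := by
  show ((Kc G).liftQ (evlin x₁ - evlin x₀) _) (Submodule.Quotient.mk f) = _
  rw [Submodule.liftQ_apply]
  rfl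

lemma dev_norm_le (x₀ x₁ : G) : ‖dev x₀ x₁‖ ≤ 2 :=
  LinearMap.mkContinuous_norm_le _ (by norm_num) _

end PartA
section PartA2

lemma face3_0 {α : Type*} (y : Fin 3 → α) :
    (fun j => y ((0 : Fin 3).succAbove j)) = ![y 1, y 2] := by
  funext j; fin_cases j <;> rfl

lemma face3_1 {α : Type*} (y : Fin 3 → α) :
    (fun j => y ((1 : Fin 3).succAbove j)) = ![y 0, y 2] := by
  funext j; fin_cases j <;> rfl

lemma face3_2 {α : Type*} (y : Fin 3 → α) :
    (fun j => y ((2 : Fin 3).succAbove j)) = ![y 0, y 1] := by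
  funext j; fin_cases j <;> rfl

lemma face2_0 {α : Type*} (y : Fin 2 → α) :
    (fun j => y ((0 : Fin 2).succAbove j)) = ![y 1] := by
  funext j; fin_cases j <;> rfl

lemma face2_1 {α : Type*} (y : Fin 2 → α) :
    (fun j => y ((1 : Fin 2).succAbove j)) = ![y 0] := by
  funext j; fin_cases j <;> rfl

lemma delta1_apply {S V : Type*} [AddCommGroup V] [Module ℝ V]
    (f : (Fin 2 → S) → V) (y : Fin 3 → S) :
    delta 1 f y = f ![y 1, y 2] - f ![y 0, y 2] + f ![y 0, y 1] := by
  show (∑ i : Fin 3, ((-1 : ℝ) ^ (i : ℕ)) • f (fun j => y (i.succAbove j))) = _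
  rw [Fin.sum_univ_three, face3_0 y, face3_1 y, face3_2 y]
  norm_num
  abel

lemma delta0_apply {S V : Type*} [AddCommGroup V] [Module ℝ V]
    (f : (Fin 1 → S) → V) (y : Fin 2 → S) :
    delta 0 f y = f ![y 1] - f ![y 0] := by
  show (∑ i : Fin 2, ((-1 : ℝ) ^ (i : ℕ)) • f (fun j => y (i.succAbove j))) = _
  rw [Fin.sum_univ_two, face2_0 y, face2_1 y]
  norm_num
  abel

variable {G : Type u} [Group G]

/-- The Johnson cocycle. -/
noncomputable def fB : (Fin 2 → G) → (WW G →L[ℝ] ℝ) := fun x => dev (x 0) (x 1)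

lemma smulCLM_apply (hW : ∀ (g : G) (w : WW G), ‖g • w‖ = ‖w‖) (g : G) (w : WW G) :
    smulCLM hW g w = g • w := rfl

lemma fB_bdd : Bdd (fB (G := G)) := ⟨2, fun x => dev_norm_le _ _⟩

lemma fB_equiv (hW : ∀ (g : G) (w : WW G), ‖g • w‖ = ‖w‖) (g : G) (x : Fin 2 → G) :
    fB (fun j => g • x j) = (fB x).comp (smulCLM hW g⁻¹) := by
  apply ContinuousLinearMap.ext
  intro w
  obtain ⟨u, rfl⟩ := Submodule.Quotient.mk_surjective _ w
  show dev (g • x 0) (g • x 1) (Submodule.Quotient.mk u)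
      = dev (x 0) (x 1) (smulCLM hW g⁻¹ (Submodule.Quotient.mk u))
  rw [smulCLM_apply, smul_WW_mk, dev_mk, dev_mk]
  have h1 : ∀ y : G, ((g⁻¹ • u : W0 G) : ∀ _ : G, ℝ) y = u (g * y) := by
    intro y
    rw [smul_W0_apply, inv_inv]
  rw [h1, h1]
  rfl

lemma fB_cocycle : delta 1 (fB (G := G)) = 0 := by
  funext y
  rw [delta1_apply]
  apply ContinuousLinearMap.ext
  intro w
  obtain ⟨u, rfl⟩ := Submodule.Quotient.mk_surjective _ w
  have hv : ∀ (a b : G), fB ![a, b] (Submodule.Quotient.mk u) = u b - u a := by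
    intro a b
    show dev (![a,b] 0) (![a,b] 1) _ = _
    rw [dev_mk]
    rfl
  have hz : (0 : (Fin (1+2) → G) → (WW G →L[ℝ] ℝ)) y (Submodule.Quotient.mk u) = 0 := rfl
  rw [hz]
  simp only [ContinuousLinearMap.add_apply, ContinuousLinearMap.sub_apply]
  rw [hv, hv, hv]
  ring

/-- The inclusion `ℓ∞(G)`(as in the statement)` → W0 G`. -/
noncomputable def toW0 : Linf G →ₗ[ℝ] W0 G where
  toFun u := ⟨(u : G → ℝ), memℓp_infty (by
    obtain ⟨D, hD⟩ := u.2
    refine ⟨D, ?_⟩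
    rintro r ⟨x, rfl⟩
    show ‖(u : G → ℝ) x‖ ≤ D
    rw [Real.norm_eq_abs]
    exact hD x)⟩
  map_add' u v := lp.ext rfl
  map_smul' r u := lp.ext rfl

lemma toW0_apply (u : Linf G) (x : G) : ((toW0 u : W0 G) : ∀ _ : G, ℝ) x = (u : G → ℝ) x := rfl

end PartA2
section PartB

variable {S : Type v}

lemma Linf.bound (u : Linf S) : ∃ C, ∀ s, |(u : S → ℝ) s| ≤ C := u.2

lemma Linf.ext {u v : Linf S} (h : ∀ s, (u : S → ℝ) s = (v : S → ℝ) s) : u = v :=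
  Subtype.ext (funext h)

/-- The admissible set for the positive-part construction. -/
def Vset (f : Linf S) : Set (Linf S) :=
  {v | (∀ s, 0 ≤ (v : S → ℝ) s) ∧ ∀ s, (v : S → ℝ) s ≤ (f : S → ℝ) s}

variable (m : Linf S →ₗ[ℝ] ℝ) (C : ℝ)
  (hbd : ∀ (u : Linf S) (D : ℝ), (∀ s, |(u : S → ℝ) s| ≤ D) → |m u| ≤ C * D)

/-- Positive part of `m` on the nonnegative cone. -/
noncomputable def Ppart (f : Linf S) : ℝ := sSup (m '' Vset f)

section lemmasB
variable {m C}

lemma Vset_zero_mem {f : Linf S} (hf : ∀ s, 0 ≤ (f : S → ℝ) s) : (0 : Linf S) ∈ Vset f :=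
  ⟨fun s => le_rfl, fun s => hf s⟩

include hbd in
lemma Vset_bddAbove (f : Linf S) : BddAbove (m '' Vset f) := by
  obtain ⟨D, hD⟩ := Linf.bound f
  refine ⟨C * D, ?_⟩
  rintro r ⟨v, ⟨hv0, hvf⟩, rfl⟩
  have : ∀ s, |(v : S → ℝ) s| ≤ D := fun s => by
    rw [abs_of_nonneg (hv0 s)]
    exact (hvf s).trans ((le_abs_self _).trans (hD s))
  exact (le_abs_self _).trans (hbd v D this)

include hbd in
lemma le_Ppart {f v : Linf S} (hv : v ∈ Vset f) : m v ≤ Ppart m f :=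
  le_csSup (Vset_bddAbove hbd f) ⟨v, hv, rfl⟩

lemma Ppart_le {f : Linf S} (hf : ∀ s, 0 ≤ (f : S → ℝ) s) {a : ℝ}
    (h : ∀ v ∈ Vset f, m v ≤ a) : Ppart m f ≤ a :=
  csSup_le ⟨m 0, 0, Vset_zero_mem hf, rfl⟩ (by rintro r ⟨v, hv, rfl⟩; exact h v hv)

include hbd in
lemma Ppart_nonneg {f : Linf S} (hf : ∀ s, 0 ≤ (f : S → ℝ) s) : 0 ≤ Ppart m f := by
  have := le_Ppart hbd (Vset_zero_mem hf)
  simpa using this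

lemma Ppart_zero : Ppart m (0 : Linf S) = 0 := by
  have h0 : ∀ s, 0 ≤ ((0 : Linf S) : S → ℝ) s := fun s => by simp
  refine le_antisymm (Ppart_le h0 ?_) ?_
  · rintro v ⟨hv0, hvf⟩
    have : v = 0 := Linf.ext fun s => le_antisymm (by simpa using hvf s) (hv0 s)
    simp [this]
  · have hbdd : BddAbove (m '' Vset (0 : Linf S)) := by
      refine ⟨m 0, ?_⟩
      rintro r ⟨v, ⟨hv0, hvf⟩, rfl⟩
      have : v = 0 := Linf.ext fun s => le_antisymm (by simpa using hvf s) (hv0 s)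
      simp [this]
    have : m 0 ≤ Ppart m 0 := le_csSup hbdd ⟨0, Vset_zero_mem h0, rfl⟩
    simpa using this

include hbd in
lemma Ppart_add {f g : Linf S} (hf : ∀ s, 0 ≤ (f : S → ℝ) s)
    (hg : ∀ s, 0 ≤ (g : S → ℝ) s) :
    Ppart m (f + g) = Ppart m f + Ppart m g := by
  have hfg : ∀ s, 0 ≤ ((f + g : Linf S) : S → ℝ) s := fun s => by
    have := add_nonneg (hf s) (hg s); simpa using this
  refine le_antisymm ?_ ?_
  · refine Ppart_le hfg ?_
    rintro v ⟨hv0, hvfg⟩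
    obtain ⟨Df, hDf⟩ := Linf.bound f
    set v1 : Linf S := ⟨fun s => min ((v : S → ℝ) s) ((f : S → ℝ) s), ⟨Df, fun s => by
      show |min ((v : S → ℝ) s) ((f : S → ℝ) s)| ≤ Df
      rcases le_total ((v : S → ℝ) s) ((f : S → ℝ) s) with h | h
      · rw [min_eq_left h, abs_of_nonneg (hv0 s)]
        exact h.trans ((le_abs_self _).trans (hDf s))
      · rw [min_eq_right h]
        exact hDf s⟩⟩ with hv1
    have hv1c : ∀ s, (v1 : S → ℝ) s = min ((v : S → ℝ) s) ((f : S → ℝ) s) := fun s => rfl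
    have h1 : v1 ∈ Vset f := by
      constructor
      · intro s; rw [hv1c]; exact le_min (hv0 s) (hf s)
      · intro s; rw [hv1c]; exact min_le_right _ _
    have h2 : v - v1 ∈ Vset g := by
      constructor
      · intro s
        have : (v1 : S → ℝ) s ≤ (v : S → ℝ) s := by rw [hv1c]; exact min_le_left _ _
        have hc : ((v - v1 : Linf S) : S → ℝ) s = (v : S → ℝ) s - (v1 : S → ℝ) s := rfl
        rw [hc]; linarith
      · intro s
        have hvs : (v : S → ℝ) s ≤ (f : S → ℝ) s + (g : S → ℝ) s := by
          have := hvfg s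
          simpa using this
        have : (v : S → ℝ) s - (g : S → ℝ) s ≤ (v1 : S → ℝ) s := by
          rw [hv1c]
          exact le_min (by linarith [hg s]) (by linarith)
        have hc : ((v - v1 : Linf S) : S → ℝ) s = (v : S → ℝ) s - (v1 : S → ℝ) s := rfl
        rw [hc]; linarith
    calc m v = m v1 + m (v - v1) := by rw [← map_add]; congr 1; abel
    _ ≤ Ppart m f + Ppart m g := add_le_add (le_Ppart hbd h1) (le_Ppart hbd h2)
  · have key : ∀ v1 ∈ Vset f, ∀ v2 ∈ Vset g, m v1 + m v2 ≤ Ppart m (f + g) := by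
      intro v1 h1 v2 h2
      have : v1 + v2 ∈ Vset (f + g) := by
        constructor
        · intro s
          have := add_nonneg (h1.1 s) (h2.1 s)
          simpa using this
        · intro s
          have := add_le_add (h1.2 s) (h2.2 s)
          simpa using this
      have := le_Ppart hbd this
      simpa using this
    have h1 : ∀ v1 ∈ Vset f, m v1 + Ppart m g ≤ Ppart m (f + g) := by
      intro v1 hv1
      have : Ppart m g ≤ Ppart m (f + g) - m v1 :=
        Ppart_le hg fun v2 hv2 => by linarith [key v1 hv1 v2 hv2]
      linarith
    have : Ppart m f ≤ Ppart m (f + g) - Ppart m g :=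
      Ppart_le hf fun v1 hv1 => by linarith [h1 v1 hv1]
    linarith

include hbd in
lemma Ppart_smul {f : Linf S} (hf : ∀ s, 0 ≤ (f : S → ℝ) s) {t : ℝ} (ht : 0 ≤ t) :
    Ppart m (t • f) = t * Ppart m f := by
  rcases eq_or_lt_of_le ht with rfl | ht
  · simp [Ppart_zero]
  have htf : ∀ s, 0 ≤ ((t • f : Linf S) : S → ℝ) s := fun s => by
    have : ((t • f : Linf S) : S → ℝ) s = t * (f : S → ℝ) s := rfl
    rw [this]; exact mul_nonneg ht.le (hf s)
  refine le_antisymm ?_ ?_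
  · refine Ppart_le htf ?_
    rintro v ⟨hv0, hvf⟩
    have hmem : t⁻¹ • v ∈ Vset f := by
      constructor
      · intro s
        have : ((t⁻¹ • v : Linf S) : S → ℝ) s = t⁻¹ * (v : S → ℝ) s := rfl
        rw [this]; exact mul_nonneg (inv_nonneg.2 ht.le) (hv0 s)
      · intro s
        have hc : ((t⁻¹ • v : Linf S) : S → ℝ) s = t⁻¹ * (v : S → ℝ) s := rfl
        have h2 : (v : S → ℝ) s ≤ t * (f : S → ℝ) s := hvf s
        rw [hc, inv_mul_le_iff₀ ht]
        linarith
    have : m (t⁻¹ • v) ≤ Ppart m f := le_Ppart hbd hmem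
    have h3 : m v = t * m (t⁻¹ • v) := by
      rw [map_smul]
      simp [smul_eq_mul]
      field_simp
    rw [h3]
    exact mul_le_mul_of_nonneg_left this ht.le
  · rw [mul_comm, ← le_div_iff₀ ht, div_eq_mul_inv, mul_comm]
    refine Ppart_le hf ?_
    intro v hv
    have hmem : t • v ∈ Vset (t • f) := by
      constructor
      · intro s
        have : ((t • v : Linf S) : S → ℝ) s = t * (v : S → ℝ) s := rfl
        rw [this]; exact mul_nonneg ht.le (hv.1 s)
      · intro s
        have h1 : ((t • v : Linf S) : S → ℝ) s = t * (v : S → ℝ) s := rfl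
        have h2 : ((t • f : Linf S) : S → ℝ) s = t * (f : S → ℝ) s := rfl
        rw [h1, h2]
        exact mul_le_mul_of_nonneg_left (hv.2 s) ht.le
    have h4 : m (t • v) ≤ Ppart m (t • f) := le_Ppart hbd hmem
    have h5 : m (t • v) = t * m v := by rw [map_smul]; simp [smul_eq_mul]
    rw [h5] at h4
    calc m v = t⁻¹ * (t * m v) := by field_simp
    _ ≤ t⁻¹ * Ppart m (t • f) := by
        exact mul_le_mul_of_nonneg_left h4 (inv_nonneg.2 ht.le)

lemma Vset_comp {f : Linf S} {σ : S → S} (hσ : Function.Bijective σ) :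
    m '' Vset (compL σ f) = m '' Vset f → True := fun _ => trivial

include hbd in
lemma Ppart_inv {f : Linf S} {σ : S → S} (hσ : Function.Bijective σ)
    (hmσ : ∀ u, m (compL σ u) = m u) :
    Ppart m (compL σ f) = Ppart m f := by
  have hc : ∀ (u : Linf S) (s : S), ((compL σ u : Linf S) : S → ℝ) s = (u : S → ℝ) (σ s) :=
    fun u s => rfl
  have himg : m '' Vset (compL σ f) = m '' Vset f := by
    apply Set.Subset.antisymm
    · rintro r ⟨w, ⟨hw0, hwf⟩, rfl⟩
      set e := Equiv.ofBijective σ hσ with he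
      set w' : Linf S := ⟨fun s => (w : S → ℝ) (e.symm s), by
        obtain ⟨D, hD⟩ := Linf.bound w
        exact ⟨D, fun s => hD _⟩⟩ with hw'
      have hw'c : ∀ s, (w' : S → ℝ) s = (w : S → ℝ) (e.symm s) := fun s => rfl
      have hcomp : compL σ w' = w := Linf.ext fun s => by
        rw [hc, hw'c]
        have h2 : σ s = e s := rfl
        rw [h2, e.symm_apply_apply]
      refine ⟨w', ⟨fun s => by rw [hw'c]; exact hw0 _, fun s => ?_⟩, ?_⟩
      · rw [hw'c]
        have := hwf (e.symm s)
        rw [hc] at this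
        have h2 : σ (e.symm s) = s := e.apply_symm_apply s
        rwa [h2] at this
      · rw [← hmσ w', hcomp]
    · rintro r ⟨v, ⟨hv0, hvf⟩, rfl⟩
      refine ⟨compL σ v, ⟨fun s => by rw [hc]; exact hv0 _, fun s => by
        rw [hc, hc]; exact hvf _⟩, (hmσ v)⟩
  unfold Ppart
  rw [himg]

end lemmasB
end PartB
section PartB2

variable {S : Type v}

lemma Linf.exists_nonneg_bound (f : Linf S) : ∃ D, 0 ≤ D ∧ ∀ s, |(f : S → ℝ) s| ≤ D := by
  obtain ⟨D, hD⟩ := Linf.bound f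
  exact ⟨max D 0, le_max_right _ _, fun s => (hD s).trans (le_max_left _ _)⟩

/-- A nonnegative bound for `f`. -/
noncomputable def cbnd (f : Linf S) : ℝ := Classical.choose (Linf.exists_nonneg_bound f)

lemma cbnd_nonneg (f : Linf S) : 0 ≤ cbnd f :=
  (Classical.choose_spec (Linf.exists_nonneg_bound f)).1

lemma cbnd_bound (f : Linf S) : ∀ s, |(f : S → ℝ) s| ≤ cbnd f :=
  (Classical.choose_spec (Linf.exists_nonneg_bound f)).2

lemma cbnd_shift (f : Linf S) : ∀ s, 0 ≤ ((f + (cbnd f) • constLinf S 1 : Linf S) : S → ℝ) s := by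
  intro s
  have h1 : ((f + (cbnd f) • constLinf S 1 : Linf S) : S → ℝ) s = (f : S → ℝ) s + cbnd f := by
    show (f : S → ℝ) s + cbnd f * 1 = _
    ring
  rw [h1]
  have := (abs_le.1 (cbnd_bound f s)).1
  linarith

lemma const_coe (t : ℝ) (s : S) : ((t • constLinf S 1 : Linf S) : S → ℝ) s = t := by
  show t * 1 = t; ring

variable (m : Linf S →ₗ[ℝ] ℝ) (C : ℝ)

/-- Linear extension of the positive part. -/
noncomputable def Mpart (f : Linf S) : ℝ :=
  Ppart m (f + (cbnd f) • constLinf S 1) - cbnd f * Ppart m (constLinf S 1)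

section lemmasB2
variable {m C}
variable (hbd : ∀ (u : Linf S) (D : ℝ), (∀ s, |(u : S → ℝ) s| ≤ D) → |m u| ≤ C * D)

lemma one_nonneg' : ∀ s, 0 ≤ ((constLinf S 1 : Linf S) : S → ℝ) s := fun _ => zero_le_one

include hbd in
lemma Ppart_shift {f : Linf S} {t : ℝ} (hf : ∀ s, 0 ≤ (f : S → ℝ) s) (ht : 0 ≤ t) :
    Ppart m (f + t • constLinf S 1) = Ppart m f + t * Ppart m (constLinf S 1) := by
  rw [Ppart_add hbd hf (fun s => by rw [const_coe]; exact ht),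
    Ppart_smul hbd one_nonneg' ht]

include hbd in
lemma Mpart_spec {f : Linf S} {t : ℝ} (ht : 0 ≤ t)
    (hft : ∀ s, 0 ≤ ((f + t • constLinf S 1 : Linf S) : S → ℝ) s) :
    Mpart m f = Ppart m (f + t • constLinf S 1) - t * Ppart m (constLinf S 1) := by
  have key : ∀ t₁ t₂ : ℝ, 0 ≤ t₁ → 0 ≤ t₂ →
      (∀ s, 0 ≤ ((f + t₁ • constLinf S 1 : Linf S) : S → ℝ) s) →
      (∀ s, 0 ≤ ((f + t₂ • constLinf S 1 : Linf S) : S → ℝ) s) →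
      Ppart m (f + t₁ • constLinf S 1) - t₁ * Ppart m (constLinf S 1)
        = Ppart m (f + t₂ • constLinf S 1) - t₂ * Ppart m (constLinf S 1) := by
    intro t₁ t₂ h₁ h₂ hs₁ hs₂
    have e1 : f + t₁ • constLinf S 1 + t₂ • constLinf S 1
        = f + t₂ • constLinf S 1 + t₁ • constLinf S 1 := by abel
    have e2 := Ppart_shift hbd hs₁ h₂
    have e3 := Ppart_shift hbd hs₂ h₁
    rw [e1] at e2
    rw [e3] at e2
    linarith
  exact key (cbnd f) t (cbnd_nonneg f) ht (cbnd_shift f) hft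

include hbd in
lemma Mpart_nonneg_eq {f : Linf S} (hf : ∀ s, 0 ≤ (f : S → ℝ) s) :
    Mpart m f = Ppart m f := by
  have h := Mpart_spec hbd le_rfl (t := 0) (f := f) (by
    intro s
    have : ((f + (0:ℝ) • constLinf S 1 : Linf S) : S → ℝ) s = (f : S → ℝ) s := by
      have : (f + (0:ℝ) • constLinf S 1 : Linf S) = f := by simp
      rw [this]
    rw [this]; exact hf s)
  rw [h]
  have : (f + (0:ℝ) • constLinf S 1 : Linf S) = f := by simp
  rw [this]
  ring

include hbd in
lemma Mpart_add (f g : Linf S) : Mpart m (f + g) = Mpart m f + Mpart m g := by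
  have hf := cbnd_shift f
  have hg := cbnd_shift g
  have hsum : ∀ s, 0 ≤ (((f + g) + (cbnd f + cbnd g) • constLinf S 1 : Linf S) : S → ℝ) s := by
    intro s
    have e : ((f + g) + (cbnd f + cbnd g) • constLinf S 1 : Linf S)
        = (f + cbnd f • constLinf S 1) + (g + cbnd g • constLinf S 1) := by
      rw [add_smul]; abel
    rw [e]
    have := add_nonneg (hf s) (hg s)
    simpa using this
  rw [Mpart_spec hbd (add_nonneg (cbnd_nonneg f) (cbnd_nonneg g)) hsum]
  have e : ((f + g) + (cbnd f + cbnd g) • constLinf S 1 : Linf S)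
      = (f + cbnd f • constLinf S 1) + (g + cbnd g • constLinf S 1) := by
    rw [add_smul]; abel
  rw [e, Ppart_add hbd hf hg]
  unfold Mpart
  ring

include hbd in
lemma Mpart_zero : Mpart m 0 = 0 := by
  have := Mpart_nonneg_eq hbd (f := 0) (fun s => by simp)
  rw [this, Ppart_zero]

include hbd in
lemma Mpart_smul (t : ℝ) (f : Linf S) : Mpart m (t • f) = t * Mpart m f := by
  have key : ∀ t : ℝ, 0 ≤ t → ∀ f : Linf S, Mpart m (t • f) = t * Mpart m f := by
    intro t ht f
    have hshift : ∀ s, 0 ≤ ((t • f + (t * cbnd f) • constLinf S 1 : Linf S) : S → ℝ) s := by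
      intro s
      have e : ((t • f + (t * cbnd f) • constLinf S 1 : Linf S) : S → ℝ) s
          = t * ((f : S → ℝ) s + cbnd f) := by
        show t * (f : S → ℝ) s + (t * cbnd f) * 1 = _
        ring
      rw [e]
      refine mul_nonneg ht ?_
      have := (abs_le.1 (cbnd_bound f s)).1
      linarith
    rw [Mpart_spec hbd (mul_nonneg ht (cbnd_nonneg f)) hshift]
    have e : (t • f + (t * cbnd f) • constLinf S 1 : Linf S)
        = t • (f + cbnd f • constLinf S 1) := by
      rw [smul_add, mul_smul]
    rw [e, Ppart_smul hbd (cbnd_shift f) ht]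
    unfold Mpart
    ring
  rcases le_total 0 t with ht | ht
  · exact key t ht f
  · have h1 : Mpart m (t • f) + Mpart m ((-t) • f) = 0 := by
      rw [← Mpart_add hbd]
      have : t • f + (-t) • f = 0 := by
        rw [← add_smul]; simp
      rw [this, Mpart_zero hbd]
    have h2 := key (-t) (by linarith) f
    linarith

include hbd in
lemma Mpart_inv {σ : S → S} (hσ : Function.Bijective σ)
    (hmσ : ∀ u, m (compL σ u) = m u) (f : Linf S) :
    Mpart m (compL σ f) = Mpart m f := by
  have hcomm : compL σ (f + cbnd f • constLinf S 1)
      = compL σ f + cbnd f • constLinf S 1 := by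
    apply Linf.ext
    intro s
    show (f : S → ℝ) (σ s) + cbnd f * 1 = (f : S → ℝ) (σ s) + cbnd f * 1
    rfl
  have hshift : ∀ s, 0 ≤ ((compL σ f + cbnd f • constLinf S 1 : Linf S) : S → ℝ) s := by
    intro s
    rw [← hcomm]
    exact cbnd_shift f (σ s)
  rw [Mpart_spec hbd (cbnd_nonneg f) hshift, ← hcomm,
    Ppart_inv hbd hσ hmσ]
  rfl

include hbd in
lemma Ppart_one_ge (hm1 : m (constLinf S 1) = 1) : 1 ≤ Ppart m (constLinf S 1) := by
  have : constLinf S 1 ∈ Vset (constLinf S 1) :=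
    ⟨one_nonneg', fun s => le_rfl⟩
  have := le_Ppart hbd this
  linarith [hm1 ▸ this]

include hbd in
/-- Positivization: from an invariant normalized bounded functional, produce a mean. -/
lemma posify (hm1 : m (constLinf S 1) = 1) :
    ∃ m' : Linf S →ₗ[ℝ] ℝ,
      m' (constLinf S 1) = 1 ∧
      (∀ u : Linf S, (∀ s, 0 ≤ (u : S → ℝ) s) → 0 ≤ m' u) ∧
      ∀ σ : S → S, Function.Bijective σ → (∀ u, m (compL σ u) = m u) →
        ∀ u, m' (compL σ u) = m' u := by
  have hP1 := Ppart_one_ge hbd hm1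
  have hP1pos : 0 < Ppart m (constLinf S 1) := by linarith
  set Mlin : Linf S →ₗ[ℝ] ℝ :=
    { toFun := Mpart m
      map_add' := Mpart_add hbd
      map_smul' := fun t f => by simp only [RingHom.id_apply, smul_eq_mul]; exact Mpart_smul hbd t f }
    with hMlin
  refine ⟨(Ppart m (constLinf S 1))⁻¹ • Mlin, ?_, ?_, ?_⟩
  · show (Ppart m (constLinf S 1))⁻¹ • Mlin (constLinf S 1) = 1
    have : Mlin (constLinf S 1) = Ppart m (constLinf S 1) := Mpart_nonneg_eq hbd one_nonneg'
    rw [this, smul_eq_mul]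
    field_simp
  · intro u hu
    show 0 ≤ (Ppart m (constLinf S 1))⁻¹ • Mlin u
    have : Mlin u = Ppart m u := Mpart_nonneg_eq hbd hu
    rw [this, smul_eq_mul]
    exact mul_nonneg (inv_nonneg.2 hP1pos.le) (Ppart_nonneg hbd hu)
  · intro σ hσ hmσ u
    show (Ppart m (constLinf S 1))⁻¹ • Mlin (compL σ u) = (Ppart m (constLinf S 1))⁻¹ • Mlin u
    have : Mlin (compL σ u) = Mlin u := Mpart_inv hbd hσ hmσ u
    rw [this]

end lemmasB2
end PartB2
section PartC

variable {G : Type u} [Group G]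

/-- A left-`H`-equivariant retraction `G → H`. -/
noncomputable def retr (H : Subgroup G) : G → H := fun g =>
  ⟨g * ((Quotient.mk (QuotientGroup.rightRel H) g).out)⁻¹, by
    have h := Quotient.exact ((Quotient.mk (QuotientGroup.rightRel H) g).out_eq)
    exact (QuotientGroup.rightRel_apply).1 h⟩

lemma retr_equivariant (H : Subgroup G) (h : H) (g : G) :
    retr H ((h : G) * g) = h * retr H g := by
  have hmk : Quotient.mk (QuotientGroup.rightRel H) ((h : G) * g)
      = Quotient.mk (QuotientGroup.rightRel H) g := by
    refine Quot.sound ?_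
    rw [QuotientGroup.rightRel_apply]
    simpa using H.inv_mem h.2
  apply Subtype.ext
  show ((h : G) * g) * _ = (h : G) * (g * _)
  rw [hmk, mul_assoc]

/-- Transfer: an `H`-invariant mean-like functional on `ℓ∞(G)` gives an
invariant mean on `H`. -/
lemma transfer (H : Subgroup G) (m' : Linf G →ₗ[ℝ] ℝ)
    (h1 : m' (constLinf G 1) = 1)
    (hpos : ∀ u : Linf G, (∀ s, 0 ≤ (u : G → ℝ) s) → 0 ≤ m' u)
    (hinv : ∀ h : H, ∀ u : Linf G, m' (compL (fun s : G => (h : G)⁻¹ * s) u) = m' u) :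
    InvariantMean H H := by
  set L : Linf H →ₗ[ℝ] Linf G :=
    { toFun := fun f => ⟨fun g => (f : H → ℝ) (retr H g), by
        obtain ⟨D, hD⟩ := f.2
        exact ⟨D, fun g => hD _⟩⟩
      map_add' := fun f g => rfl
      map_smul' := fun r f => rfl }
    with hL
  have hLcoe : ∀ (f : Linf H) (g : G), ((L f : Linf G) : G → ℝ) g = (f : H → ℝ) (retr H g) :=
    fun f g => rfl
  refine ⟨m'.comp L, ?_, ?_, ?_⟩
  · have : L (constLinf H 1) = constLinf G 1 := rfl
    show m' (L (constLinf H 1)) = 1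
    rw [this, h1]
  · intro f hf
    exact hpos (L f) fun g => hf _
  · intro h f
    show m' (L (compL (fun s : H => h⁻¹ • s) f)) = m' (L f)
    have key : L (compL (fun s : H => h⁻¹ • s) f)
        = compL (fun s : G => (h : G)⁻¹ * s) (L f) := by
      apply Subtype.ext
      funext g
      show (f : H → ℝ) (h⁻¹ • retr H g) = (f : H → ℝ) (retr H ((h : G)⁻¹ * g))
      have : retr H ((h : G)⁻¹ * g) = h⁻¹ * retr H g := by
        have := retr_equivariant H h⁻¹ g
        simpa using this
      rw [this]
      rfl
    rw [key, hinv h (L f)]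

end PartC

set_option maxHeartbeats 4000000
set_option synthInstance.maxHeartbeats 1000000

/-- Theorem C, (iii) ⇒ (i).  Let `F` be a family of subgroups of
`G` (so the trivial subgroup `⊥` belongs to `F`).  If for every normed `ℝG`-module
`W` the restriction along the embedding `G → G/F` induces a bijection
`H¹_{F,b}(G; W^#) → H¹_b(G; W^#)` — surjective and injective up to coboundaries of
bounded equivariant cochains — then every subgroup `H ∈ F` is amenable. -/
theorem canonical_map_H1_bijective_implies_amenable (G : Type u) [Group G]
    (F : Set (Subgroup G)) (hF : IsFamily F) (hbot : (⊥ : Subgroup G) ∈ F)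
    (hiso : ∀ (W : Type u) [NormedAddCommGroup W] [NormedSpace ℝ W]
      [DistribMulAction G W] [SMulCommClass G ℝ W],
      ∀ hW : ∀ (g : G) (w : W), ‖g • w‖ = ‖w‖,
      -- surjectivity of `H¹_{F,b}(G;W^#) → H¹_b(G;W^#)`
      (∀ f : (Fin 2 → G) → (W →L[ℝ] ℝ),
        Bdd f →
        (∀ (g : G) (x : Fin 2 → G),
          f (fun j => g • x j) = (f x).comp (smulCLM hW g⁻¹)) →
        delta 1 f = 0 →
        ∃ c : (Fin 2 → Cos G F) → (W →L[ℝ] ℝ),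
          Bdd c ∧
          (∀ (g : G) (x : Fin 2 → Cos G F),
            c (fun j => g • x j) = (c x).comp (smulCLM hW g⁻¹)) ∧
          delta 1 c = 0 ∧
          ∃ b : (Fin 1 → G) → (W →L[ℝ] ℝ),
            Bdd b ∧
            (∀ (g : G) (x : Fin 1 → G),
              b (fun j => g • x j) = (b x).comp (smulCLM hW g⁻¹)) ∧
            ∀ x : Fin 2 → G,
              c (fun j => trivEmb hbot (x j)) = f x + delta 0 b x) ∧
      -- injectivity of `H¹_{F,b}(G;W^#) → H¹_b(G;W^#)`
      ∀ c : (Fin 2 → Cos G F) → (W →L[ℝ] ℝ),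
        Bdd c →
        (∀ (g : G) (x : Fin 2 → Cos G F),
          c (fun j => g • x j) = (c x).comp (smulCLM hW g⁻¹)) →
        delta 1 c = 0 →
        (∃ b : (Fin 1 → G) → (W →L[ℝ] ℝ),
          Bdd b ∧
          (∀ (g : G) (x : Fin 1 → G),
            b (fun j => g • x j) = (b x).comp (smulCLM hW g⁻¹)) ∧
          ∀ x : Fin 2 → G, c (fun j => trivEmb hbot (x j)) = delta 0 b x) →
        ∃ b' : (Fin 1 → Cos G F) → (W →L[ℝ] ℝ),
          Bdd b' ∧
          (∀ (g : G) (x : Fin 1 → Cos G F),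
            b' (fun j => g • x j) = (b' x).comp (smulCLM hW g⁻¹)) ∧
          c = delta 0 b') :
    ∀ H : Subgroup G, H ∈ F → InvariantMean H H := by
  obtain ⟨hsurj, -⟩ := hiso (WW G) norm_WW_smul
  obtain ⟨c, -, hceq, hccoc, b, -, hbeq, hcomp⟩ :=
    hsurj fB fB_bdd (fB_equiv norm_WW_smul) fB_cocycle
  intro H hH
  -- the basepoint fixed by `H`
  set x₀ : Cos G F := ⟨⟨H, hH⟩, QuotientGroup.mk 1⟩ with hx₀
  have hx₀fix : ∀ h : G, h ∈ H → h • x₀ = x₀ := by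
    intro h hh
    show (⟨⟨H, hH⟩, h • (QuotientGroup.mk 1 : G ⧸ H)⟩ : Cos G F) = ⟨⟨H, hH⟩, QuotientGroup.mk 1⟩
    congr 1
    rw [MulAction.Quotient.smul_mk]
    apply QuotientGroup.eq.2
    simpa using H.inv_mem hh
  have hemb : ∀ g h : G, (fun j => trivEmb hbot (![g, h] j)) = ![trivEmb hbot g, trivEmb hbot h] := by
    intro g h; funext j; fin_cases j <;> rfl
  have hembsmul : ∀ g x : G, g • trivEmb hbot x = trivEmb hbot (g * x) := by
    intro g x
    show (⟨⟨⊥, hbot⟩, g • (QuotientGroup.mk x : G ⧸ (⊥ : Subgroup G))⟩ : Cos G F) = _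
    rw [MulAction.Quotient.smul_mk]
    rfl
  -- the (partially equivariant) primitive
  set β : G → (WW G →L[ℝ] ℝ) := fun g => c ![x₀, trivEmb hbot g] - b ![g] with hβ
  have claim1 : ∀ g₀ g₁ : G, β g₁ - β g₀ = fB ![g₀, g₁] := by
    intro g₀ g₁
    have hc3 := congrFun hccoc ![x₀, trivEmb hbot g₀, trivEmb hbot g₁]
    rw [delta1_apply] at hc3
    simp only [Matrix.cons_val_zero, Matrix.cons_val_one, Matrix.head_cons,
      Matrix.cons_val_two, Matrix.tail_cons, Pi.zero_apply] at hc3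
    have hX : c ![x₀, trivEmb hbot g₁] - c ![x₀, trivEmb hbot g₀]
        = c ![trivEmb hbot g₀, trivEmb hbot g₁] := by
      have h2 : c ![x₀, trivEmb hbot g₁] - c ![x₀, trivEmb hbot g₀]
          - c ![trivEmb hbot g₀, trivEmb hbot g₁]
          = -(c ![trivEmb hbot g₀, trivEmb hbot g₁] - c ![x₀, trivEmb hbot g₁]
            + c ![x₀, trivEmb hbot g₀]) := by abel
      rw [hc3, neg_zero] at h2
      exact sub_eq_zero.1 h2
    have hco := hcomp ![g₀, g₁]
    rw [hemb g₀ g₁] at hco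
    rw [delta0_apply] at hco
    simp only [Matrix.cons_val_zero, Matrix.cons_val_one, Matrix.head_cons] at hco
    rw [hβ]
    simp only []
    rw [sub_sub_sub_comm] at *
    calc c ![x₀, trivEmb hbot g₁] - c ![x₀, trivEmb hbot g₀] - (b ![g₁] - b ![g₀])
        = c ![trivEmb hbot g₀, trivEmb hbot g₁] - (b ![g₁] - b ![g₀]) := by rw [hX]
    _ = fB ![g₀, g₁] := by rw [hco]; abel
  have claim2 : ∀ h : G, h ∈ H → ∀ g : G,
      β (h * g) = (β g).comp (smulCLM norm_WW_smul h⁻¹) := by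
    intro h hh g
    have hc2 := hceq h ![x₀, trivEmb hbot g]
    have harg : (fun j => h • (![x₀, trivEmb hbot g]) j) = ![x₀, trivEmb hbot (h * g)] := by
      funext j
      fin_cases j
      · show h • x₀ = x₀
        exact hx₀fix h hh
      · show h • trivEmb hbot g = trivEmb hbot (h * g)
        exact hembsmul h g
    rw [harg] at hc2
    have hb2 := hbeq h ![g]
    have harg2 : (fun j => h • (![g]) j) = ![h * g] := by
      funext j; fin_cases j
      show h • g = h * g
      rfl
    rw [harg2] at hb2
    rw [hβ]
    simp only []
    rw [hc2, hb2, ContinuousLinearMap.sub_comp]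
  -- the invariant functional on `ℓ∞(G)`
  set ev1 : Linf G →ₗ[ℝ] ℝ :=
    { toFun := fun u => (u : G → ℝ) 1
      map_add' := fun u v => rfl
      map_smul' := fun r u => rfl }
    with hev1
  set m : Linf G →ₗ[ℝ] ℝ :=
    ev1 - ((β 1).toLinearMap ∘ₗ (Kc G).mkQ ∘ₗ toW0)
    with hm
  have hmval : ∀ u : Linf G,
      m u = (u : G → ℝ) 1 - β 1 (Submodule.Quotient.mk (toW0 u)) := fun u => rfl
  have hdevval : ∀ (a b : G) (u : Linf G),
      dev a b (Submodule.Quotient.mk (toW0 u)) = (u : G → ℝ) b - (u : G → ℝ) a := by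
    intro a b u
    rw [dev_mk]
    rfl
  have hconst : ∀ (g : G) (u : Linf G),
      m u = (u : G → ℝ) g - β g (Submodule.Quotient.mk (toW0 u)) := by
    intro g u
    have h1 := claim1 1 g
    have h2 := congrArg (fun φ => φ (Submodule.Quotient.mk (toW0 u) : WW G)) h1
    simp only [ContinuousLinearMap.sub_apply] at h2
    have h3 : fB ![(1 : G), g] (Submodule.Quotient.mk (toW0 u))
        = (u : G → ℝ) g - (u : G → ℝ) 1 := by
      show dev (![(1:G), g] 0) (![(1:G), g] 1) _ = _
      have e0 : (![(1:G), g]) 0 = 1 := rfl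
      have e1 : (![(1:G), g]) 1 = g := rfl
      rw [e0, e1, hdevval]
    rw [h3] at h2
    rw [hmval]
    linarith [h2]
  have hm1 : m (constLinf G 1) = 1 := by
    rw [hmval]
    have h1 : toW0 (constLinf G 1) = const1 G := lp.ext rfl
    have h2 : (Submodule.Quotient.mk (const1 G) : WW G) = 0 :=
      (Submodule.Quotient.mk_eq_zero _).2 (Submodule.mem_span_singleton_self _)
    rw [h1, h2, map_zero]
    show (1 : ℝ) - 0 = 1
    ring
  have hbd : ∀ (u : Linf G) (D : ℝ), (∀ s, |(u : G → ℝ) s| ≤ D) →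
      |m u| ≤ (1 + ‖β 1‖) * D := by
    intro u D hD
    have hD0 : 0 ≤ D := le_trans (abs_nonneg _) (hD 1)
    have h1 : ‖toW0 u‖ ≤ D := by
      refine lp.norm_le_of_forall_le hD0 fun x => ?_
      show ‖(u : G → ℝ) x‖ ≤ D
      rw [Real.norm_eq_abs]
      exact hD x
    have h2 : ‖(Submodule.Quotient.mk (toW0 u) : WW G)‖ ≤ D :=
      le_trans (Submodule.Quotient.norm_mk_le _ _) h1
    have h3 : |β 1 (Submodule.Quotient.mk (toW0 u))| ≤ ‖β 1‖ * D := by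
      have := (β 1).le_opNorm (Submodule.Quotient.mk (toW0 u))
      have h4 : ‖β 1 (Submodule.Quotient.mk (toW0 u) : WW G)‖
          ≤ ‖β 1‖ * D := by
        calc ‖β 1 (Submodule.Quotient.mk (toW0 u) : WW G)‖
            ≤ ‖β 1‖ * ‖(Submodule.Quotient.mk (toW0 u) : WW G)‖ := this
        _ ≤ ‖β 1‖ * D := mul_le_mul_of_nonneg_left h2 ((β 1).opNorm_nonneg)
      rwa [Real.norm_eq_abs] at h4
    rw [hmval]
    calc |(u : G → ℝ) 1 - β 1 (Submodule.Quotient.mk (toW0 u))|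
        ≤ |(u : G → ℝ) 1| + |β 1 (Submodule.Quotient.mk (toW0 u))| := abs_sub _ _
    _ ≤ D + ‖β 1‖ * D := add_le_add (hD 1) h3
    _ = (1 + ‖β 1‖) * D := by ring
  have hminv : ∀ h : G, h ∈ H → ∀ u : Linf G,
      m (compL (fun s => h⁻¹ * s) u) = m u := by
    intro h hh u
    set u' : Linf G := compL (fun s => h⁻¹ * s) u with hu'
    have hju' : toW0 u' = h • toW0 u := lp.ext rfl
    have h1 : m u' = (u' : G → ℝ) h - β h (Submodule.Quotient.mk (toW0 u')) := hconst h u'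
    have h2 : (u' : G → ℝ) h = (u : G → ℝ) 1 := by
      show (u : G → ℝ) (h⁻¹ * h) = (u : G → ℝ) 1
      rw [inv_mul_cancel]
    have h3 : (Submodule.Quotient.mk (toW0 u') : WW G)
        = h • (Submodule.Quotient.mk (toW0 u) : WW G) := by
      rw [hju', smul_WW_mk]
    set w : WW G := Submodule.Quotient.mk (toW0 u) with hwdef
    have h4 : β h (h • w) = β 1 w := by
      have h5 := claim2 h hh 1
      rw [mul_one] at h5
      calc β h (h • w) = ((β 1).comp (smulCLM norm_WW_smul h⁻¹)) (h • w) := by rw [h5]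
      _ = β 1 (h⁻¹ • (h • w)) := rfl
      _ = β 1 w := by rw [← mul_smul, inv_mul_cancel, one_smul]
    rw [h1, h2, h3, h4, hmval]
  -- positivize and transfer
  obtain ⟨m', hm'1, hm'pos, hm'inv⟩ := posify hbd hm1
  refine transfer H m' hm'1 hm'pos ?_
  intro h u
  exact hm'inv (fun s => (h : G)⁻¹ * s) (Equiv.mulLeft ((h : G)⁻¹)).bijective
    (hminv (h : G) h.2) u


end RelBdd
end

section
/- Let G be a group and F a family of subgroups of G. If G is amenable relative to F (i.e. the G-set G/F admits a G-invariant mean), then for every normed ℝG-module W the dual normed ℝG-module W^# is relatively F-injective. -/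
open scoped BigOperators

universe u v w

namespace RelBdd

variable {G : Type u} [Group G]

/-- Proposition 4.9, (i) ⇒ (ii).  If `G` is amenable relative to
the family `F` (the `G`-set `G/F` admits a `G`-invariant mean), then for every
normed `ℝG`-module `W` the dual `W^# = W →L[ℝ] ℝ` (with action
`(g • φ) w = φ (g⁻¹ • w)`) is relatively `F`-injective. -/
theorem relatively_amenable_implies_dual_relatively_injective (G : Type u) [Group G]
    (F : Set (Subgroup G)) (hF : IsFamily F)
    (hamen : InvariantMean G (Cos G F))
    (W : Type v) [NormedAddCommGroup W] [NormedSpace ℝ W] [DistribMulAction G W]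
    [SMulCommClass G ℝ W] (hW : ∀ (g : G) (w : W), ‖g • w‖ = ‖w‖)
    (A : Type w) [NormedAddCommGroup A] [NormedSpace ℝ A] [DistribMulAction G A]
    [SMulCommClass G ℝ A] (hA : ∀ (g : G) (a : A), ‖g • a‖ = ‖a‖)
    (B : Type w) [NormedAddCommGroup B] [NormedSpace ℝ B] [DistribMulAction G B]
    [SMulCommClass G ℝ B] (hB : ∀ (g : G) (b : B), ‖g • b‖ = ‖b‖)
    (i : A →L[ℝ] B) (hi : ∀ (g : G) (a : A), i (g • a) = g • i a)
    (hstrong : ∃ K : ℝ, 0 ≤ K ∧ ∀ H ∈ F, ∃ σ : B →L[ℝ] A,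
      ‖σ‖ ≤ K ∧ (∀ h : G, h ∈ H → ∀ b, σ (h • b) = h • σ b) ∧ ∀ a, σ (i a) = a)
    (ψ : A →L[ℝ] (W →L[ℝ] ℝ))
    (hψequiv : ∀ (g : G) (a : A), ψ (g • a) = (ψ a).comp (smulCLM hW g⁻¹)) :
    ∃ Ψ : B →L[ℝ] (W →L[ℝ] ℝ),
      (∀ (g : G) (b : B), Ψ (g • b) = (Ψ b).comp (smulCLM hW g⁻¹)) ∧
      ∀ a, Ψ (i a) = ψ a := by
  classical
  obtain ⟨K, hK0, hσ'⟩ := hstrong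
  choose σ hσnorm hσequiv hσsec using hσ'
  obtain ⟨m, hm1, hmpos, hminv⟩ := hamen
  -- the mean of a constant is that constant
  have hmconst : ∀ r : ℝ, m (constLinf (Cos G F) r) = r := by
    intro r
    have h : constLinf (Cos G F) r = r • constLinf (Cos G F) 1 := by
      apply Subtype.ext; funext s; simp [constLinf]
    rw [h, map_smul, hm1, smul_eq_mul, mul_one]
  -- the mean is bounded
  have hmbdd : ∀ (f : Linf (Cos G F)) (C : ℝ),
      (∀ s, |(f : Cos G F → ℝ) s| ≤ C) → |m f| ≤ C := by
    intro f C hC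
    rw [abs_le]
    constructor
    · have h1 : 0 ≤ m (f + constLinf (Cos G F) C) := by
        apply hmpos; intro s
        have := (abs_le.1 (hC s)).1
        show 0 ≤ (f : Cos G F → ℝ) s + C
        linarith
      rw [map_add, hmconst] at h1; linarith
    · have h2 : 0 ≤ m (constLinf (Cos G F) C - f) := by
        apply hmpos; intro s
        have := (abs_le.1 (hC s)).2
        show 0 ≤ C - (f : Cos G F → ℝ) s
        linarith
      rw [map_sub, hmconst] at h2; linarith
  -- representative of a point of Cos G F
  let rep : Cos G F → G := fun x => Quotient.out (x.2 : G ⧸ (x.1 : Subgroup G))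
  have hrep : ∀ x : Cos G F, ((rep x : G) : G ⧸ (x.1 : Subgroup G)) = x.2 :=
    fun x => QuotientGroup.out_eq' _
  -- the key auxiliary map
  let u : B → Cos G F → A := fun b x => rep x • σ x.1.1 x.1.2 ((rep x)⁻¹ • b)
  have hu_add : ∀ b₁ b₂ x, u (b₁ + b₂) x = u b₁ x + u b₂ x := by
    intro b₁ b₂ x
    show rep x • σ x.1.1 x.1.2 ((rep x)⁻¹ • (b₁ + b₂)) = _
    rw [smul_add, map_add, smul_add]
  have hu_smul : ∀ (r : ℝ) b x, u (r • b) x = r • u b x := by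
    intro r b x
    show rep x • σ x.1.1 x.1.2 ((rep x)⁻¹ • (r • b)) = _
    rw [smul_comm ((rep x)⁻¹) r b, map_smul, smul_comm]
  have hu_norm : ∀ b x, ‖u b x‖ ≤ K * ‖b‖ := by
    intro b x
    calc ‖u b x‖ = ‖σ x.1.1 x.1.2 ((rep x)⁻¹ • b)‖ := hA _ _
      _ ≤ ‖σ x.1.1 x.1.2‖ * ‖(rep x)⁻¹ • b‖ := ContinuousLinearMap.le_opNorm _ _
      _ ≤ K * ‖b‖ := by
          rw [hB]
          exact mul_le_mul_of_nonneg_right (hσnorm _ _) (norm_nonneg b)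
  have hu_equiv : ∀ (g : G) (b : B) (x : Cos G F), u b (g • x) = g • u (g⁻¹ • b) x := by
    intro g b x
    have h1 : ((rep (g • x) : G) : G ⧸ (x.1 : Subgroup G)) = ((g * rep x : G) : G ⧸ _) := by
      have h0 := hrep (g • x)
      have h2 : (g • x).2 = g • x.2 := rfl
      rw [h2, ← hrep x] at h0
      exact h0
    have hmem : (g * rep x)⁻¹ * rep (g • x) ∈ (x.1 : Subgroup G) :=
      QuotientGroup.eq.mp h1.symm
    set h := (g * rep x)⁻¹ * rep (g • x) with hh
    have hrepgx : rep (g • x) = g * rep x * h := by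
      rw [hh]; group
    show rep (g • x) • σ x.1.1 x.1.2 ((rep (g • x))⁻¹ • b) = _
    rw [hrepgx]
    have harg : (g * rep x * h)⁻¹ • b = h⁻¹ • ((rep x)⁻¹ • (g⁻¹ • b)) := by
      rw [← mul_smul, ← mul_smul]; congr 1; group
    rw [harg, hσequiv x.1.1 x.1.2 h⁻¹ (inv_mem hmem)]
    show (g * rep x * h) • h⁻¹ • σ x.1.1 x.1.2 ((rep x)⁻¹ • g⁻¹ • b) = _
    rw [← mul_smul, ← mul_smul]
    have he : g * rep x * h * h⁻¹ = g * rep x := by group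
    rw [he, mul_smul, mul_smul ((rep x)⁻¹) g⁻¹ b]
  -- the bounded function on Cos G F
  have hf_bd : ∀ (b : B) (w : W) (x : Cos G F),
      |ψ (u b x) w| ≤ ‖ψ‖ * (K * ‖b‖) * ‖w‖ := by
    intro b w x
    calc |ψ (u b x) w| = ‖ψ (u b x) w‖ := (Real.norm_eq_abs _).symm
      _ ≤ ‖ψ (u b x)‖ * ‖w‖ := ContinuousLinearMap.le_opNorm _ _
      _ ≤ (‖ψ‖ * ‖u b x‖) * ‖w‖ :=
          mul_le_mul_of_nonneg_right (ContinuousLinearMap.le_opNorm _ _) (norm_nonneg w)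
      _ ≤ ‖ψ‖ * (K * ‖b‖) * ‖w‖ := by
          apply mul_le_mul_of_nonneg_right _ (norm_nonneg w)
          exact mul_le_mul_of_nonneg_left (hu_norm b x) (norm_nonneg ψ)
  have hf_mem : ∀ (b : B) (w : W), (fun x => ψ (u b x) w) ∈ Linf (Cos G F) :=
    fun b w => ⟨‖ψ‖ * (K * ‖b‖) * ‖w‖, hf_bd b w⟩
  let F0 : B → W → Linf (Cos G F) := fun b w => ⟨fun x => ψ (u b x) w, hf_mem b w⟩
  have hF0bd : ∀ b w, |m (F0 b w)| ≤ ‖ψ‖ * (K * ‖b‖) * ‖w‖ :=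
    fun b w => hmbdd (F0 b w) _ (hf_bd b w)
  have hF0w_add : ∀ b w₁ w₂, F0 b (w₁ + w₂) = F0 b w₁ + F0 b w₂ := by
    intro b w₁ w₂
    apply Subtype.ext; funext x
    show ψ (u b x) (w₁ + w₂) = ψ (u b x) w₁ + ψ (u b x) w₂
    rw [map_add]
  have hF0w_smul : ∀ b (r : ℝ) w, F0 b (r • w) = r • F0 b w := by
    intro b r w
    apply Subtype.ext; funext x
    show ψ (u b x) (r • w) = r * ψ (u b x) w
    rw [map_smul]; rfl
  have hF0b_add : ∀ b₁ b₂ w, F0 (b₁ + b₂) w = F0 b₁ w + F0 b₂ w := by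
    intro b₁ b₂ w
    apply Subtype.ext; funext x
    show ψ (u (b₁ + b₂) x) w = ψ (u b₁ x) w + ψ (u b₂ x) w
    rw [hu_add, map_add]; rfl
  have hF0b_smul : ∀ (r : ℝ) b w, F0 (r • b) w = r • F0 b w := by
    intro r b w
    apply Subtype.ext; funext x
    show ψ (u (r • b) x) w = r * ψ (u b x) w
    rw [hu_smul, map_smul]; rfl
  -- assemble the dual-valued map
  let Φ : B → W →L[ℝ] ℝ := fun b => LinearMap.mkContinuous
    { toFun := fun w => m (F0 b w)
      map_add' := fun w₁ w₂ => by
        show m (F0 b (w₁ + w₂)) = m (F0 b w₁) + m (F0 b w₂)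
        rw [hF0w_add, map_add]
      map_smul' := fun r w => by
        show m (F0 b (r • w)) = r * m (F0 b w)
        rw [hF0w_smul, map_smul]; rfl }
    (‖ψ‖ * (K * ‖b‖)) (fun w => by
      rw [Real.norm_eq_abs]
      exact hF0bd b w)
  have hΦapp : ∀ b w, Φ b w = m (F0 b w) := fun b w => rfl
  have hΦnorm : ∀ b, ‖Φ b‖ ≤ ‖ψ‖ * K * ‖b‖ := by
    intro b
    calc ‖Φ b‖ ≤ ‖ψ‖ * (K * ‖b‖) := by
          apply ContinuousLinearMap.opNorm_le_bound _
            (mul_nonneg (norm_nonneg ψ) (mul_nonneg hK0 (norm_nonneg b)))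
          intro w
          rw [hΦapp, Real.norm_eq_abs]
          exact hF0bd b w
      _ = ‖ψ‖ * K * ‖b‖ := by ring
  refine ⟨LinearMap.mkContinuous
    { toFun := Φ
      map_add' := fun b₁ b₂ => by
        apply ContinuousLinearMap.ext; intro w
        show m (F0 (b₁ + b₂) w) = m (F0 b₁ w) + m (F0 b₂ w)
        rw [hF0b_add, map_add]
      map_smul' := fun r b => by
        apply ContinuousLinearMap.ext; intro w
        show m (F0 (r • b) w) = r * m (F0 b w)
        rw [hF0b_smul, map_smul]; rfl }
    (‖ψ‖ * K) (fun b => hΦnorm b), ?_, ?_⟩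
  · -- equivariance
    intro g b
    apply ContinuousLinearMap.ext; intro w
    show m (F0 (g • b) w) = m (F0 b (smulCLM hW g⁻¹ w))
    have hsm : smulCLM hW g⁻¹ w = g⁻¹ • w := rfl
    rw [hsm]
    have h1 : F0 b (g⁻¹ • w) = compL (fun s => (g⁻¹ : G)⁻¹ • s) (F0 (g • b) w) := by
      apply Subtype.ext; funext x
      show ψ (u b x) (g⁻¹ • w) = ψ (u (g • b) ((g⁻¹ : G)⁻¹ • x)) w
      rw [inv_inv, hu_equiv g (g • b) x, inv_smul_smul, hψequiv g (u b x)]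
      rfl
    rw [h1, hminv g⁻¹]
  · -- extends ψ
    intro a
    apply ContinuousLinearMap.ext; intro w
    show m (F0 (i a) w) = ψ a w
    have h1 : F0 (i a) w = constLinf (Cos G F) (ψ a w) := by
      apply Subtype.ext; funext x
      show ψ (u (i a) x) w = ψ a w
      have hu : u (i a) x = a := by
        show rep x • σ x.1.1 x.1.2 ((rep x)⁻¹ • i a) = a
        rw [← hi, hσsec, smul_inv_smul]
      rw [hu]
    rw [h1, hmconst]



end RelBdd
end

section
/- Let G be a group, N a normal subgroup of G, F = F⟨N⟩ the family of all subgroups of N, and V a normed ℝG-module. The coset space G/N is a G-subset of G/F, and since N acts trivially on G/N, every G-equivariant function (G/N)^{n+1} → V takes values in the N-fixed subspace V^N and factors through the quotient group G/N; thus the complex of bounded G-equivariant V-valued cochains on (G/N)^{•+1} is isomorphic to the complex of bounded (G/N)-equivariant V^N-valued cochains computing the ordinary bounded cohomology H^•_b(G/N; V^N). Moreover, for every n ≥ 0 the restriction map along the inclusion (G/N)^{n+1} ⊆ (G/F)^{n+1} induces an isomorphism on cohomology. Hence H^n_{F⟨N⟩,b}(G;V) ≅ H^n_b(G/N; V^N)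 for all n ≥ 0. -/
open scoped BigOperators

universe u v w

namespace RelBdd

variable {G : Type u} [Group G]

/-- For a normal subgroup `N` of `G`, the inclusion of the `G`-set `G/N` into
`G/F⟨N⟩`, where `F⟨N⟩ = {K | K ≤ N}` is the family generated by `N`. -/
def quotEmb {G : Type u} [Group G] (N : Subgroup G) :
    G ⧸ N → Cos G {K : Subgroup G | K ≤ N} :=
  fun q => ⟨⟨N, Set.mem_setOf_eq ▸ le_rfl⟩, q⟩


section Homotopy

variable {S : Type*} {T : Type*} {V : Type*} [AddCommGroup V] [Module ℝ V]

def dropF (n i : ℕ) (x : Fin (n+2) → S) : Fin (n+1) → S :=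
  fun j => if (j:ℕ) < i then x ⟨min (j:ℕ) (n+1), by omega⟩
           else x ⟨min ((j:ℕ)+1) (n+1), by omega⟩

def prism (α β : S → S) (n i : ℕ) (x : Fin (n+1) → S) : Fin (n+2) → S :=
  fun j => if (j:ℕ) ≤ i then α (x ⟨min (j:ℕ) n, by omega⟩)
           else β (x ⟨min ((j:ℕ)-1) n, by omega⟩)

def homot (α β : S → S) (n : ℕ) (c : (Fin (n+2) → S) → V) : (Fin (n+1) → S) → V :=
  fun x => ∑ i ∈ Finset.range (n+1), ((-1:ℝ)^i) • c (prism α β n i x)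

lemma delta_apply (n : ℕ) (f : (Fin (n+1) → S) → V) (x : Fin (n+2) → S) :
    delta n f x = ∑ i ∈ Finset.range (n+2), ((-1:ℝ)^i) • f (dropF n i x) := by
  rw [delta, ← Fin.sum_univ_eq_sum_range (fun i => ((-1:ℝ)^i) • f (dropF n i x)) (n+2)]
  refine Finset.sum_congr rfl fun i _ => ?_
  have h : (fun j => x (i.succAbove j)) = dropF n (i:ℕ) x := by
    funext j
    simp only [dropF]
    rw [Fin.succAbove]
    simp only [Fin.lt_def, Fin.coe_castSucc]
    split_ifs <;> (apply congrArg x; apply Fin.ext; simp; try omega)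
  rw [h]

lemma key1 (α β : S → S) (n i : ℕ) (x : Fin (n+2) → S) :
    dropF (n+1) i (prism α β (n+1) i x)
      = fun j : Fin (n+2) => if (j:ℕ) < i then α (x j) else β (x j) := by
  funext j
  simp only [dropF, prism]
  split_ifs <;>
    first
      | omega
      | (apply congrArg α; apply congrArg x; apply Fin.ext; simp; omega)
      | (apply congrArg β; apply congrArg x; apply Fin.ext; simp; omega)

lemma key2 (α β : S → S) (n i : ℕ) (x : Fin (n+2) → S) :
    dropF (n+1) (i+1) (prism α β (n+1) i x)
      = fun j : Fin (n+2) => if (j:ℕ) < i+1 then α (x j) else β (x j) := by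
  funext j
  simp only [dropF, prism]
  split_ifs <;>
    first
      | omega
      | (apply congrArg α; apply congrArg x; apply Fin.ext; simp; omega)
      | (apply congrArg β; apply congrArg x; apply Fin.ext; simp; omega)

lemma key3 (α β : S → S) (n i j : ℕ) (hj : j < i) (hi : i ≤ n+1) (x : Fin (n+2) → S) :
    dropF (n+1) j (prism α β (n+1) i x)
      = prism α β n (i-1) (dropF n j x) := by
  funext m
  simp only [dropF, prism]
  split_ifs <;>
    first
      | omega
      | (apply congrArg α; apply congrArg x; apply Fin.ext; simp only [Fin.val_mk]; omega)
      | (apply congrArg β; apply congrArg x; apply Fin.ext; simp only [Fin.val_mk]; omega)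

lemma key4 (α β : S → S) (n i j : ℕ) (hij : i+2 ≤ j) (hj : j ≤ n+2) (x : Fin (n+2) → S) :
    dropF (n+1) j (prism α β (n+1) i x)
      = prism α β n i (dropF n (j-1) x) := by
  funext m
  simp only [dropF, prism]
  split_ifs <;>
    first
      | omega
      | (apply congrArg α; apply congrArg x; apply Fin.ext; simp; omega)
      | (apply congrArg β; apply congrArg x; apply Fin.ext; simp; omega)

lemma neg_one_pow_two_mul_add (a b : ℕ) : ((-1:ℝ))^(2*a+b) = (-1)^b := by
  rw [pow_add, pow_mul]
  norm_num

lemma tri_split (n : ℕ) (P : ℕ → ℕ → V) :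
    (∑ a ∈ Finset.range (n+2), ∑ b ∈ Finset.range (n+1), ((-1:ℝ)^(a+b)) • P a b)
    = (∑ k ∈ Finset.range (n+1), ∑ j ∈ Finset.range (k+1), ((-1:ℝ)^(j+k)) • P j k)
      + ∑ i ∈ Finset.range (n+2), ∑ t ∈ Finset.range (n+1-i), ((-1:ℝ)^(t+1)) • P (i+1+t) i := by
  have split1 : ∀ a ∈ Finset.range (n+2),
      (∑ b ∈ Finset.range (n+1), ((-1:ℝ)^(a+b)) • P a b)
        = (∑ b ∈ Finset.range a, ((-1:ℝ)^(a+b)) • P a b)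
          + ∑ b ∈ Finset.Ico a (n+1), ((-1:ℝ)^(a+b)) • P a b := by
    intro a ha
    rw [Finset.mem_range] at ha
    rw [Finset.range_eq_Ico, ← Finset.sum_Ico_consecutive _ (Nat.zero_le a) (by omega), ← Finset.range_eq_Ico]
  rw [Finset.sum_congr rfl split1, Finset.sum_add_distrib]
  have e1 : (∑ a ∈ Finset.range (n+2), ∑ b ∈ Finset.Ico a (n+1), ((-1:ℝ)^(a+b)) • P a b)
      = ∑ k ∈ Finset.range (n+1), ∑ j ∈ Finset.range (k+1), ((-1:ℝ)^(j+k)) • P j k := by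
    rw [Finset.sum_comm' (t' := Finset.range (n+1)) (s' := fun b => Finset.range (b+1))
      (by intro a b; simp only [Finset.mem_range, Finset.mem_Ico]; try omega)]
  have e2 : (∑ a ∈ Finset.range (n+2), ∑ b ∈ Finset.range a, ((-1:ℝ)^(a+b)) • P a b)
      = ∑ i ∈ Finset.range (n+2), ∑ t ∈ Finset.range (n+1-i), ((-1:ℝ)^(t+1)) • P (i+1+t) i := by
    rw [Finset.sum_comm' (t' := Finset.range (n+2)) (s' := fun b => Finset.Ico (b+1) (n+2))
      (by intro a b; simp only [Finset.mem_range, Finset.mem_Ico]; try omega)]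
    refine Finset.sum_congr rfl fun b hb => ?_
    rw [Finset.sum_Ico_eq_sum_range]
    have h0 : n + 2 - (b+1) = n+1-b := by omega
    rw [h0]
    refine Finset.sum_congr rfl fun t _ => ?_
    have h2 : (b+1+t) + b = 2*b + (t+1) := by ring
    rw [h2, neg_one_pow_two_mul_add]
  rw [e1, e2]
  ring_nf
  abel

theorem homot_identity (α β : S → S) (n : ℕ) (c : (Fin (n+2) → S) → V) (x : Fin (n+2) → S) :
    delta n (homot α β n c) x + homot α β (n+1) (delta (n+1) c) x
      = c (fun j => β (x j)) - c (fun j => α (x j)) := by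
  have hL1 : delta n (homot α β n c) x
      = ∑ i ∈ Finset.range (n+2), ∑ k ∈ Finset.range (n+1),
          ((-1:ℝ)^(i+k)) • c (prism α β n k (dropF n i x)) := by
    rw [delta_apply]
    refine Finset.sum_congr rfl fun i _ => ?_
    rw [homot, Finset.smul_sum]
    refine Finset.sum_congr rfl fun k _ => ?_
    rw [smul_smul, ← pow_add]
  have hL2 : homot α β (n+1) (delta (n+1) c) x
      = ∑ i ∈ Finset.range (n+2), ∑ j ∈ Finset.range (n+3),
          ((-1:ℝ)^(i+j)) • c (dropF (n+1) j (prism α β (n+1) i x)) := by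
    rw [homot]
    refine Finset.sum_congr rfl fun i _ => ?_
    rw [delta_apply, Finset.smul_sum]
    refine Finset.sum_congr rfl fun j _ => ?_
    rw [smul_smul, ← pow_add]
  set D : ℕ → V := fun t => c (fun j : Fin (n+2) => if (j:ℕ) < t then α (x j) else β (x j))
    with hDdef
  have hsplit : ∀ i ∈ Finset.range (n+2),
      (∑ j ∈ Finset.range (n+3), ((-1:ℝ)^(i+j)) • c (dropF (n+1) j (prism α β (n+1) i x)))
      = ((∑ j ∈ Finset.range i, ((-1:ℝ)^(i+j)) • c (dropF (n+1) j (prism α β (n+1) i x)))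
          + (D i - D (i+1)))
        + ∑ j ∈ Finset.Ico (i+2) (n+3),
            ((-1:ℝ)^(i+j)) • c (dropF (n+1) j (prism α β (n+1) i x)) := by
    intro i hi
    rw [Finset.mem_range] at hi
    rw [Finset.range_eq_Ico, ← Finset.sum_Ico_consecutive _ (Nat.zero_le i) (by omega : i ≤ n+3),
        Finset.sum_eq_sum_Ico_succ_bot (by omega : i < n+3),
        Finset.sum_eq_sum_Ico_succ_bot (by omega : i+1 < n+3)]
    have d1 : ((-1:ℝ)^(i+i)) • c (dropF (n+1) i (prism α β (n+1) i x)) = D i := by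
      rw [show i+i = 2*i+0 by ring, neg_one_pow_two_mul_add, pow_zero, one_smul, key1, hDdef]
    have d2 : ((-1:ℝ)^(i+(i+1))) • c (dropF (n+1) (i+1) (prism α β (n+1) i x)) = -D (i+1) := by
      rw [show i+(i+1) = 2*i+1 by ring, neg_one_pow_two_mul_add, pow_one, neg_one_smul, key2, hDdef]
    rw [d1, d2, ← Finset.range_eq_Ico, show i+1+1 = i+2 from rfl]
    abel
  have hA : (∑ i ∈ Finset.range (n+2), ∑ j ∈ Finset.range i,
        ((-1:ℝ)^(i+j)) • c (dropF (n+1) j (prism α β (n+1) i x)))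
      = - ∑ k ∈ Finset.range (n+1), ∑ j ∈ Finset.range (k+1),
          ((-1:ℝ)^(j+k)) • c (prism α β n k (dropF n j x)) := by
    have h1 : ∀ i ∈ Finset.range (n+2),
        (∑ j ∈ Finset.range i, ((-1:ℝ)^(i+j)) • c (dropF (n+1) j (prism α β (n+1) i x)))
        = ∑ j ∈ Finset.range i, ((-1:ℝ)^(i+j)) • c (prism α β n (i-1) (dropF n j x)) := by
      intro i hi
      rw [Finset.mem_range] at hi
      refine Finset.sum_congr rfl fun j hj => ?_
      rw [Finset.mem_range] at hj
      rw [key3 α β n i j hj (by omega) x]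
    rw [Finset.sum_congr rfl h1, Finset.sum_range_succ']
    simp only [Finset.range_zero, Finset.sum_empty, add_zero]
    rw [← Finset.sum_neg_distrib]
    refine Finset.sum_congr rfl fun k _ => ?_
    rw [← Finset.sum_neg_distrib]
    refine Finset.sum_congr rfl fun j _ => ?_
    rw [show (k+1)+j = (j+k)+1 by ring, pow_succ, show k+1-1 = k from rfl,
        mul_smul, neg_one_smul, smul_neg]
  have hB : (∑ i ∈ Finset.range (n+2), ∑ j ∈ Finset.Ico (i+2) (n+3),
        ((-1:ℝ)^(i+j)) • c (dropF (n+1) j (prism α β (n+1) i x)))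
      = - ∑ i ∈ Finset.range (n+2), ∑ t ∈ Finset.range (n+1-i),
          ((-1:ℝ)^(t+1)) • c (prism α β n i (dropF n (i+1+t) x)) := by
    rw [← Finset.sum_neg_distrib]
    refine Finset.sum_congr rfl fun i hi => ?_
    rw [Finset.mem_range] at hi
    rw [Finset.sum_Ico_eq_sum_range, show n+3-(i+2) = n+1-i by omega, ← Finset.sum_neg_distrib]
    refine Finset.sum_congr rfl fun t ht => ?_
    rw [Finset.mem_range] at ht
    rw [key4 α β n i (i+2+t) (by omega) (by omega) x,
        show (i+2+t)-1 = i+1+t by omega,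
        show i+(i+2+t) = 2*(i+1)+t by ring, neg_one_pow_two_mul_add,
        pow_succ, mul_smul, neg_one_smul, smul_neg, neg_neg]
  have master := tri_split n (fun a b => c (prism α β n b (dropF n a x)))
  rw [hL1, hL2, Finset.sum_congr rfl hsplit, Finset.sum_add_distrib, Finset.sum_add_distrib,
      Finset.sum_range_sub', hA, hB]
  rw [master]
  have hD0 : D 0 = c (fun j => β (x j)) := by
    show c (fun j : Fin (n+2) => if (j:ℕ) < 0 then α (x j) else β (x j)) = _
    congr 1
    all_goals (funext j; simp)
  have hDn : D (n+2) = c (fun j => α (x j)) := by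
    show c (fun j : Fin (n+2) => if (j:ℕ) < n+2 then α (x j) else β (x j)) = _
    congr 1
    all_goals (funext j; simp [j.isLt])
  rw [← hD0, ← hDn]
  abel

lemma delta_comp (φ : S → T) (n : ℕ) (f : (Fin (n+1) → T) → V) (x : Fin (n+2) → S) :
    delta n (fun y => f (fun j => φ (y j))) x = delta n f (fun j => φ (x j)) := rfl

lemma delta_zero_fun (n : ℕ) (x : Fin (n+2) → S) :
    delta n (fun _ : Fin (n+1) → S => (0:V)) x = 0 := by
  simp [delta]

lemma delta_sub_fun (n : ℕ) (f g : (Fin (n+1) → S) → V) (x : Fin (n+2) → S) :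
    delta n (fun y => f y - g y) x = delta n f x - delta n g x := by
  simp [delta, smul_sub, Finset.sum_sub_distrib]

lemma homot_zero (α β : S → S) (n : ℕ) (x : Fin (n+1) → S) :
    homot α β n (0 : (Fin (n+2) → S) → V) x = 0 := by
  simp [homot]

lemma delta_zero_eval (d : (Fin 1 → S) → V) (X : Fin 2 → S) :
    delta 0 d X = d (fun _ => X 1) - d (fun _ => X 0) := by
  rw [delta_apply, Finset.sum_range_succ, Finset.sum_range_succ, Finset.sum_range_zero]
  have e0 : dropF 0 0 X = fun _ : Fin 1 => X 1 := by
    funext j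
    have hj : (j:ℕ) = 0 := by omega
    simp only [dropF, hj]
    split_ifs <;>
      first
        | omega
        | (apply congrArg X; apply Fin.ext; simp; try omega)
  have e1 : dropF 0 1 X = fun _ : Fin 1 => X 0 := by
    funext j
    have hj : (j:ℕ) = 0 := by omega
    simp only [dropF, hj]
    split_ifs <;>
      first
        | omega
        | (apply congrArg X; apply Fin.ext; simp; try omega)
  rw [e0, e1]
  simp
  abel

lemma prism_comp (α β σ : S → S) (hα : ∀ s, α (σ s) = σ (α s)) (hβ : ∀ s, β (σ s) = σ (β s))
    (n i : ℕ) (x : Fin (n+1) → S) :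
    prism α β n i (fun j => σ (x j)) = fun j => σ (prism α β n i x j) := by
  funext j
  simp only [prism]
  split_ifs <;> simp [hα, hβ]

end Homotopy

section EquivAux

variable {G : Type u} [Group G] {S : Type v} [SMul G S]
variable {V : Type w} [AddCommGroup V] [Module ℝ V] [DistribMulAction G V] [SMulCommClass G ℝ V]

lemma homot_equiv (α β : S → S) (n : ℕ) (c : (Fin (n+2) → S) → V) (g : G)
    (hα : ∀ s : S, α (g • s) = g • α s) (hβ : ∀ s : S, β (g • s) = g • β s)
    (hc : ∀ y : Fin (n+2) → S, c (fun j => g • y j) = g • c y)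
    (x : Fin (n+1) → S) :
    homot α β n c (fun j => g • x j) = g • homot α β n c x := by
  rw [homot, homot, Finset.smul_sum]
  refine Finset.sum_congr rfl fun i _ => ?_
  rw [prism_comp α β (fun s => g • s) hα hβ, hc]
  exact (smul_comm g ((-1:ℝ)^i) _).symm

end EquivAux

section BddAux

variable {S : Type*} {V : Type*} [NormedAddCommGroup V] [NormedSpace ℝ V]

lemma bdd_homot (α β : S → S) (n : ℕ) (c : (Fin (n+2) → S) → V) (h : Bdd c) :
    Bdd (homot α β n c) := by
  obtain ⟨C, hC⟩ := h
  refine ⟨(n+1) * C, fun x => ?_⟩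
  calc ‖homot α β n c x‖
      ≤ ∑ i ∈ Finset.range (n+1), ‖((-1:ℝ)^i) • c (prism α β n i x)‖ := norm_sum_le _ _
    _ ≤ ∑ _i ∈ Finset.range (n+1), C := by
        refine Finset.sum_le_sum fun i _ => ?_
        rw [norm_smul, norm_pow, norm_neg, norm_one, one_pow, one_mul]
        exact hC _
    _ = (n+1) * C := by
        rw [Finset.sum_const, Finset.card_range, nsmul_eq_mul]
        push_cast
        ring

end BddAux

section GroupAux

variable {G : Type u} [Group G]

def proj (N : Subgroup G) : Cos G {K : Subgroup G | K ≤ N} → G ⧸ N :=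
  fun x => Quotient.liftOn' x.2 (fun g => (QuotientGroup.mk g : G ⧸ N))
    (fun a b h => Quotient.sound'
      (QuotientGroup.leftRel_apply.mpr (x.1.2 (QuotientGroup.leftRel_apply.mp h))))

lemma proj_quotEmb (N : Subgroup G) (q : G ⧸ N) : proj N (quotEmb N q) = q := by
  refine QuotientGroup.induction_on q ?_
  intro a
  rfl

lemma proj_smul (N : Subgroup G) (g : G) (x : Cos G {K : Subgroup G | K ≤ N}) :
    proj N (g • x) = g • proj N x := by
  obtain ⟨H, q⟩ := x
  exact QuotientGroup.induction_on q (fun a => rfl)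

lemma quotEmb_smul (N : Subgroup G) (g : G) (q : G ⧸ N) :
    quotEmb N (g • q) = g • quotEmb N q := rfl

lemma smul_trivial (N : Subgroup G) [hN : N.Normal] (u : G) (hu : u ∈ N) (q : G ⧸ N) :
    u • q = q := by
  refine QuotientGroup.induction_on q ?_
  intro a
  show QuotientGroup.mk (u * a) = QuotientGroup.mk a
  rw [QuotientGroup.eq]
  have h : (u * a)⁻¹ * a = a⁻¹ * u⁻¹ * a := by group
  rw [h]
  simpa using hN.conj_mem u⁻¹ (N.inv_mem hu) a⁻¹

end GroupAux

/-- Corollary 3.10.  Let `N` be a normal subgroup of `G`,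
`F⟨N⟩ = {K | K ≤ N}` the family generated by `N`, and `V` a normed `ℝG`-module.
Every bounded `G`-equivariant cochain on `(G/N)^{•+1}` takes values in the `N`-fixed
vectors `V^N` (so, since it also factors through `G/N`, the complex of bounded
`G`-equivariant `V`-cochains on `(G/N)^{•+1}` computes the ordinary bounded
cohomology `H^•_b(G/N; V^N)`); moreover restriction along `(G/N)^{n+1} ⊆
(G/F⟨N⟩)^{n+1}` induces an isomorphism on cohomology in every degree.  Hence
`H^n_{F⟨N⟩,b}(G;V) ≅ H^n_b(G/N; V^N)` for all `n ≥ 0`. -/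
theorem bounded_bredon_of_normal_subgroup (G : Type u) [Group G]
    (N : Subgroup G) [N.Normal]
    (V : Type v) [NormedAddCommGroup V] [NormedSpace ℝ V] [DistribMulAction G V]
    [SMulCommClass G ℝ V] (hV : ∀ (g : G) (v : V), ‖g • v‖ = ‖v‖) :
    -- (a) bounded `G`-equivariant cochains on `(G/N)^{•+1}` take values in `V^N`
    (∀ (n : ℕ) (f : (Fin (n + 1) → G ⧸ N) → V),
      (∀ (g : G) (x : Fin (n + 1) → G ⧸ N), f (fun j => g • x j) = g • f x) →
      ∀ (x : Fin (n + 1) → G ⧸ N) (u : G), u ∈ N → u • f x = f x) ∧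
    -- (b) restriction along `G/N ⊆ G/F⟨N⟩` induces an isomorphism on cohomology:
    -- degree 0: bijection on `0`-cocycles
    ((∀ f : (Fin 1 → G ⧸ N) → V,
        Bdd f →
        (∀ (g : G) (x : Fin 1 → G ⧸ N), f (fun j => g • x j) = g • f x) →
        delta 0 f = 0 →
        ∃ c : (Fin 1 → Cos G {K : Subgroup G | K ≤ N}) → V,
          Bdd c ∧
          (∀ (g : G) (x : Fin 1 → Cos G {K : Subgroup G | K ≤ N}),
            c (fun j => g • x j) = g • c x) ∧
          delta 0 c = 0 ∧
          ∀ x : Fin 1 → G ⧸ N, c (fun j => quotEmb N (x j)) = f x) ∧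
      ∀ c c' : (Fin 1 → Cos G {K : Subgroup G | K ≤ N}) → V,
        Bdd c → (∀ (g : G) (x : Fin 1 → Cos G {K : Subgroup G | K ≤ N}),
          c (fun j => g • x j) = g • c x) → delta 0 c = 0 →
        Bdd c' → (∀ (g : G) (x : Fin 1 → Cos G {K : Subgroup G | K ≤ N}),
          c' (fun j => g • x j) = g • c' x) → delta 0 c' = 0 →
        (∀ x : Fin 1 → G ⧸ N,
          c (fun j => quotEmb N (x j)) = c' (fun j => quotEmb N (x j))) →
        c = c') ∧
    -- degrees `n ≥ 1`: surjectivity and injectivity up to coboundaries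
    ∀ m : ℕ,
      (∀ f : (Fin (m + 2) → G ⧸ N) → V,
        Bdd f →
        (∀ (g : G) (x : Fin (m + 2) → G ⧸ N), f (fun j => g • x j) = g • f x) →
        delta (m + 1) f = 0 →
        ∃ c : (Fin (m + 2) → Cos G {K : Subgroup G | K ≤ N}) → V,
          Bdd c ∧
          (∀ (g : G) (x : Fin (m + 2) → Cos G {K : Subgroup G | K ≤ N}),
            c (fun j => g • x j) = g • c x) ∧
          delta (m + 1) c = 0 ∧
          ∃ b : (Fin (m + 1) → G ⧸ N) → V,
            Bdd b ∧
            (∀ (g : G) (x : Fin (m + 1) → G ⧸ N), b (fun j => g • x j) = g • b x) ∧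
            ∀ x : Fin (m + 2) → G ⧸ N,
              c (fun j => quotEmb N (x j)) = f x + delta m b x) ∧
      ∀ c : (Fin (m + 2) → Cos G {K : Subgroup G | K ≤ N}) → V,
        Bdd c →
        (∀ (g : G) (x : Fin (m + 2) → Cos G {K : Subgroup G | K ≤ N}),
          c (fun j => g • x j) = g • c x) →
        delta (m + 1) c = 0 →
        (∃ b : (Fin (m + 1) → G ⧸ N) → V,
          Bdd b ∧
          (∀ (g : G) (x : Fin (m + 1) → G ⧸ N), b (fun j => g • x j) = g • b x) ∧
          ∀ x : Fin (m + 2) → G ⧸ N, c (fun j => quotEmb N (x j)) = delta m b x) →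
        ∃ b' : (Fin (m + 1) → Cos G {K : Subgroup G | K ≤ N}) → V,
          Bdd b' ∧
          (∀ (g : G) (x : Fin (m + 1) → Cos G {K : Subgroup G | K ≤ N}),
            b' (fun j => g • x j) = g • b' x) ∧
          c = delta m b' := by
  classical
  constructor
  · -- (a)
    intro n f hf x u hu
    have hx : (fun j => u • x j) = x := funext fun j => smul_trivial N u hu (x j)
    rw [← hf u x, hx]
  constructor
  · constructor
    · -- degree 0 surjectivity
      intro f hB hE hd
      refine ⟨fun y => f (fun j => proj N (y j)), ?_, ?_, ?_, ?_⟩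
      · obtain ⟨C, hC⟩ := hB
        exact ⟨C, fun y => hC _⟩
      · intro g y
        show f (fun j => proj N (g • y j)) = g • f (fun j => proj N (y j))
        have h2 : (fun j => proj N (g • y j)) = fun j => g • proj N (y j) :=
          funext fun j => proj_smul N g (y j)
        rw [h2]
        exact hE g _
      · funext x
        show delta 0 (fun y => f (fun j => proj N (y j))) x = 0
        rw [delta_comp (proj N) 0 f x, hd]
        rfl
      · intro x
        show f (fun j => proj N (quotEmb N (x j))) = f x
        have h3 : (fun j => proj N (quotEmb N (x j))) = x :=
          funext fun j => proj_quotEmb N (x j)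
        rw [h3]
    · -- degree 0 injectivity
      intro c c' hBc hEc hdc hBc' hEc' hdc' hres
      have hconst : ∀ d : (Fin 1 → Cos G {K : Subgroup G | K ≤ N}) → V, delta 0 d = 0 →
          ∀ y z : Fin 1 → Cos G {K : Subgroup G | K ≤ N}, d y = d z := by
        intro d hd y z
        have h := congrFun hd ![y 0, z 0]
        rw [delta_zero_eval] at h
        simp only [Matrix.cons_val_one, Matrix.head_cons, Matrix.cons_val_zero,
          Pi.zero_apply] at h
        have hy : y = fun _ : Fin 1 => y 0 := funext fun j => by
          have : j = 0 := Subsingleton.elim j 0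
          rw [this]
        have hz : z = fun _ : Fin 1 => z 0 := funext fun j => by
          have : j = 0 := Subsingleton.elim j 0
          rw [this]
        rw [hy, hz]
        exact (sub_eq_zero.mp h).symm
      funext y
      have e : Fin 1 → Cos G {K : Subgroup G | K ≤ N} :=
        fun _ => quotEmb N (QuotientGroup.mk 1)
      have h1 := hconst c hdc y (fun _ => quotEmb N (QuotientGroup.mk 1))
      have h2 := hconst c' hdc' y (fun _ => quotEmb N (QuotientGroup.mk 1))
      have h3 := hres (fun _ => (QuotientGroup.mk 1 : G ⧸ N))
      rw [h1, h2]
      exact h3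
  · -- degrees ≥ 1
    intro m
    constructor
    · -- surjectivity
      intro f hB hE hd
      refine ⟨fun y => f (fun j => proj N (y j)), ?_, ?_, ?_,
        fun _ => (0:V), ⟨0, fun x => by simp⟩, ?_, ?_⟩
      · obtain ⟨C, hC⟩ := hB
        exact ⟨C, fun y => hC _⟩
      · intro g y
        show f (fun j => proj N (g • y j)) = g • f (fun j => proj N (y j))
        have h2 : (fun j => proj N (g • y j)) = fun j => g • proj N (y j) :=
          funext fun j => proj_smul N g (y j)
        rw [h2]
        exact hE g _
      · funext x
        show delta (m+1) (fun y => f (fun j => proj N (y j))) x = 0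
        rw [delta_comp (proj N) (m+1) f x, hd]
        rfl
      · intro g x
        exact (smul_zero g).symm
      · intro x
        show f (fun j => proj N (quotEmb N (x j)))
          = f x + delta m (fun _ : Fin (m+1) → G ⧸ N => (0:V)) x
        have h3 : (fun j => proj N (quotEmb N (x j))) = x :=
          funext fun j => proj_quotEmb N (x j)
        rw [h3, delta_zero_fun, add_zero]
    · -- injectivity
      rintro c hBc hEc hdc ⟨b, hBb, hEb, hres⟩
      refine ⟨fun y => b (fun j => proj N (y j))
          - homot id (fun s => quotEmb N (proj N s)) m c y, ?_, ?_, ?_⟩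
      · obtain ⟨C1, h1⟩ := hBb
        obtain ⟨C2, h2⟩ := bdd_homot id (fun s => quotEmb N (proj N s)) m c hBc
        exact ⟨C1 + C2, fun y => (norm_sub_le _ _).trans (add_le_add (h1 _) (h2 _))⟩
      · intro g y
        show b (fun j => proj N (g • y j))
            - homot id (fun s => quotEmb N (proj N s)) m c (fun j => g • y j)
          = g • (b (fun j => proj N (y j))
            - homot id (fun s => quotEmb N (proj N s)) m c y)
        have e1 : (fun j => proj N (g • y j)) = fun j => g • proj N (y j) :=
          funext fun j => proj_smul N g (y j)
        rw [e1, hEb g,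
          homot_equiv id (fun s => quotEmb N (proj N s)) m c g (fun s => rfl)
            (fun s => by
              show quotEmb N (proj N (g • s)) = g • quotEmb N (proj N s)
              rw [proj_smul, quotEmb_smul]) (hEc g) y,
          smul_sub]
      · funext x
        have hid := homot_identity id (fun s => quotEmb N (proj N s)) m c x
        rw [hdc] at hid
        rw [homot_zero, add_zero] at hid
        have hHH : delta m (homot id (fun s => quotEmb N (proj N s)) m c) x
            = c (fun j => quotEmb N (proj N (x j))) - c x := by
          rw [hid]
          congr 1
        have hcr : c (fun j => quotEmb N (proj N (x j)))
            = delta m (fun y => b (fun j => proj N (y j))) x := by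
          have h4 := hres (fun j => proj N (x j))
          rw [delta_comp (proj N) m b x]
          exact h4
        have final : delta m (fun y => b (fun j => proj N (y j))
              - homot id (fun s => quotEmb N (proj N s)) m c y) x
            = delta m (fun y => b (fun j => proj N (y j))) x
              - delta m (homot id (fun s => quotEmb N (proj N s)) m c) x :=
          delta_sub_fun m _ _ x
        show c x = _
        rw [final, hHH, ← hcr]
        abel


end RelBdd
end
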